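/- arXiv:0809.3425 — 4 statements merged into one kernel-verified Lean document; each statement's English description precedes it below -/
import Mathlib

section
/- For every ordinal α < ω₁^CK there is a computable (decidable) well-founded binary relation on the natural numbers whose ordinal height is exactly α. -/
namespace AutoStruct

/-! ### Regular languages, convolutions, regular relations -/

/-- A language is regular if it is accepted by a DFA with finitely many states. -/
def IsRegularLang {α : Type} (L : Set (List α)) : Prop :=
  ∃ (σ : Type) (_ : Fintype σ) (M : DFA α σ), M.accepts = L

/-- Convolution of a pair of words, using `none` as the padding symbol `◇`. -/
def conv2 {α : Type} (u v : List α) : List (Option α × Option α) :=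
  (List.range (max u.length v.length)).map fun k => (u[k]?, v[k]?)

/-- Convolution of an `n`-tuple of words, using `none` as the padding symbol `◇`. -/
def conv {α : Type} {n : ℕ} (w : Fin n → List α) : List (Fin n → Option α) :=
  (List.range (Finset.univ.sup fun i => (w i).length)).map fun k i => (w i)[k]?

/-- A binary relation on words is regular if the language of convolutions of its pairs
is regular. -/
def IsRegularRel2 {α : Type} (r : List α → List α → Prop) : Prop :=
  IsRegularLang {w | ∃ u v, r u v ∧ w = conv2 u v}

/-- An `n`-ary relation on words is regular if the language of convolutions of its tuples
is regular. -/
def IsRegularRel {α : Type} {n : ℕ} (R : (Fin n → List α) → Prop) : Prop :=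
  IsRegularLang {w | ∃ t, R t ∧ w = conv t}

/-! ### Ordinal heights of well-founded relations -/

/-- The rank `r_A(x) = sup { r_A(y) + 1 : (y,x) ∈ R }` of an element of a well-founded
relation. -/
noncomputable def wfRank {β : Type} {r : β → β → Prop} (h : WellFounded r) (x : β) :
    Ordinal :=
  (h.apply x).rank

/-- The ordinal height `r(A) = sup { r_A(x) : x ∈ A }` of a well-founded relation. -/
noncomputable def relHeight {β : Type} {r : β → β → Prop} (h : WellFounded r) : Ordinal :=
  ⨆ x, wfRank h x

/-! ### Computable ordinals -/

/-- An ordinal is computable if it is the order type of a computable (decidable) well-ordering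
of (a decidable set of) natural numbers. -/
def IsComputableOrdinal (α : Ordinal) : Prop :=
  ∃ (A : Set ℕ) (r : ℕ → ℕ → Prop) (_ : ComputablePred fun n => n ∈ A)
    (_ : ComputablePred fun p : ℕ × ℕ => r p.1 p.2)
    (hwo : IsWellOrder {n // n ∈ A} fun x y => r x.1 y.1),
    @Ordinal.type _ _ hwo = α

/-- `ω₁^CK`, the least non-computable ordinal. -/
noncomputable def omega1CK : Ordinal :=
  sInf {α | ¬ IsComputableOrdinal α}

/-! ### Scott rank machinery for relational structures -/

section ScottRank

variable {D : Type}

/-- Atomic (quantifier-free) equivalence of two tuples in a relational structure with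
relations `rel i` of arity `ar i`: the tuples satisfy the same quantifier-free formulas. -/
def atomEquiv {ν : ℕ} {ar : Fin ν → ℕ} (rel : (i : Fin ν) → (Fin (ar i) → D) → Prop)
    {k : ℕ} (a b : Fin k → D) : Prop :=
  (∀ i j, a i = a j ↔ b i = b j) ∧
  ∀ (i : Fin ν) (f : Fin (ar i) → Fin k), rel i (a ∘ f) ↔ rel i (b ∘ f)

/-- The back-and-forth equivalence relations `ā ≡^α b̄` on tuples of a relational
structure. -/
noncomputable def bfEquiv {ν : ℕ} {ar : Fin ν → ℕ}
    (rel : (i : Fin ν) → (Fin (ar i) → D) → Prop)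
    (α : Ordinal) (k : ℕ) (a b : Fin k → D) : Prop :=
  if α = 0 then atomEquiv rel a b
  else ∀ β < α,
    (∀ (l : ℕ) (c : Fin l → D), ∃ d : Fin l → D,
      bfEquiv rel β (k + l) (Fin.append a c) (Fin.append b d)) ∧
    (∀ (l : ℕ) (d : Fin l → D), ∃ c : Fin l → D,
      bfEquiv rel β (k + l) (Fin.append a c) (Fin.append b d))
termination_by α
decreasing_by all_goals assumption

/-- An automorphism of a relational structure. -/
def IsAutomorphism {ν : ℕ} {ar : Fin ν → ℕ} (rel : (i : Fin ν) → (Fin (ar i) → D) → Prop)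
    (g : D ≃ D) : Prop :=
  ∀ (i : Fin ν) (t : Fin (ar i) → D), rel i t ↔ rel i fun j => g (t j)

/-- The Scott rank of a tuple: the least `β` such that `≡^β`-equivalence to the tuple implies
being in the same automorphism orbit. -/
noncomputable def tupleSR {ν : ℕ} {ar : Fin ν → ℕ}
    (rel : (i : Fin ν) → (Fin (ar i) → D) → Prop) {k : ℕ} (a : Fin k → D) : Ordinal :=
  sInf {β | ∀ b : Fin k → D, bfEquiv rel β k a b →
    ∃ g : D ≃ D, IsAutomorphism rel g ∧ ∀ i, g (a i) = b i}

/-- The Scott rank of a relational structure: the least ordinal greater than the Scott ranks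
of all finite tuples. -/
noncomputable def scottRank {ν : ℕ} {ar : Fin ν → ℕ}
    (rel : (i : Fin ν) → (Fin (ar i) → D) → Prop) : Ordinal :=
  sInf {γ | ∀ (k : ℕ) (a : Fin k → D), tupleSR rel a < γ}

end ScottRank

/-! ### Word structures: automatic and computable structures -/

/-- A structure `(A; R₁, …, R_ν)` whose domain is a set of words over the alphabet `α`,
with `ν` relations, the `i`-th of arity `ar i`. -/
structure WordStructure (α : Type) (ν : ℕ) (ar : Fin ν → ℕ) where
  dom : Set (List α)
  rel : (i : Fin ν) → (Fin (ar i) → List α) → Prop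
  rel_dom : ∀ i t, rel i t → ∀ j, t j ∈ dom

/-- The relations of a word structure, restricted to (the subtype of) its domain. -/
def WordStructure.relOn {α : Type} {ν : ℕ} {ar : Fin ν → ℕ} (S : WordStructure α ν ar) :
    (i : Fin ν) → (Fin (ar i) → ↥S.dom) → Prop :=
  fun i t => S.rel i fun j => ↑(t j)

/-- A word structure is automatic if its domain is a regular language and all its relations
are regular. -/
def WordStructure.IsAutomatic {α : Type} {ν : ℕ} {ar : Fin ν → ℕ}
    (S : WordStructure α ν ar) : Prop :=
  IsRegularLang S.dom ∧ ∀ i, IsRegularRel (S.rel i)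

/-- A word structure is computable if its domain and all its relations are computable. -/
def WordStructure.IsComputableStr {α : Type} [Primcodable α] {ν : ℕ} {ar : Fin ν → ℕ}
    (S : WordStructure α ν ar) : Prop :=
  ComputablePred (fun w : List α => w ∈ S.dom) ∧
    ∀ i, ComputablePred fun t : Fin (ar i) → List α => S.rel i t

/-- The Scott rank of a word structure. -/
noncomputable def WordStructure.SR {α : Type} {ν : ℕ} {ar : Fin ν → ℕ}
    (S : WordStructure α ν ar) : Ordinal :=
  scottRank S.relOn

/-! ### Abstract relational structures, isomorphism, ω-fold disjoint union -/

/-- An abstract relational structure with `ν` relations of arities `ar`. -/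
structure RelStruct (ν : ℕ) (ar : Fin ν → ℕ) where
  carrier : Type
  rel : (i : Fin ν) → (Fin (ar i) → carrier) → Prop

/-- The abstract relational structure underlying a word structure. -/
def WordStructure.toRelStruct {α : Type} {ν : ℕ} {ar : Fin ν → ℕ}
    (S : WordStructure α ν ar) : RelStruct ν ar :=
  ⟨↥S.dom, S.relOn⟩

/-- Isomorphism of abstract relational structures. -/
def RelStruct.Iso {ν : ℕ} {ar : Fin ν → ℕ} (S T : RelStruct ν ar) : Prop :=
  ∃ g : S.carrier ≃ T.carrier, ∀ i t, S.rel i t ↔ T.rel i fun j => g (t j)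

/-- The ω-fold disjoint union of an abstract relational structure: countably many disjoint
copies, a relation holding of a tuple iff all components lie in the same copy and the
corresponding tuple satisfies the relation in the original structure. -/
def omegaFold {ν : ℕ} {ar : Fin ν → ℕ} (S : RelStruct ν ar) : RelStruct ν ar :=
  ⟨S.carrier × ℕ, fun i t => (∀ j j', (t j).2 = (t j').2) ∧ S.rel i fun j => (t j).1⟩

/-! ### Trees and Cantor–Bendixson rank -/

/-- `(T, le)` is a partial order tree: `le` is a partial order with a least element in which
every set `{x : x ≤ y}` is finite and linearly ordered. -/
def IsPOTree {T : Type} (le : T → T → Prop) : Prop :=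
  (∀ x, le x x) ∧ (∀ x y z, le x y → le y z → le x z) ∧
  (∀ x y, le x y → le y x → x = y) ∧
  (∃ r, ∀ x, le r x) ∧
  (∀ y, {x | le x y}.Finite ∧ ∀ x z, le x y → le z y → le x z ∨ le z x)

/-- `(T, S)` is a successor tree: the reflexive–transitive closure of `S` is a partial order
tree. -/
def IsSuccTree {T : Type} (S : T → T → Prop) : Prop :=
  IsPOTree (Relation.ReflTransGen S)

/-- The derivative of (a subset of) a successor tree: the set of nodes lying on at least two
distinct infinite paths within the subset. -/
def treeDeriv {T : Type} (S : T → T → Prop) (X : Set T) : Set T :=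
  {x ∈ X | ∃ p q : ℕ → T, p 0 = x ∧ q 0 = x ∧ (∀ n, p n ∈ X) ∧ (∀ n, q n ∈ X) ∧
    (∀ n, S (p n) (p (n + 1))) ∧ (∀ n, S (q n) (q (n + 1))) ∧ p ≠ q}

/-- The transfinite iteration of the tree derivative, starting from the whole tree. -/
noncomputable def treeDerivIter {T : Type} (S : T → T → Prop) (α : Ordinal) : Set T :=
  Ordinal.limitRecOn α Set.univ (fun _ X => treeDeriv S X)
    (fun o _ ih => ⋂ (β : Ordinal) (h : β < o), ih β h)

/-- The Cantor–Bendixson rank of a successor tree: the least `α` such that the `α`-th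
derivative equals the `α+1`-st derivative. -/
noncomputable def CBrank {T : Type} (S : T → T → Prop) : Ordinal :=
  sInf {α | treeDerivIter S (α + 1) = treeDerivIter S α}

/-- The derivative of (a subset of) a partial order tree: the set of nodes lying on at least
two distinct infinite paths (i.e. admitting two eventually incomparable infinite strictly
increasing chains) within the subset. -/
def poDeriv {T : Type} (le : T → T → Prop) (X : Set T) : Set T :=
  {x ∈ X | ∃ p q : ℕ → T, p 0 = x ∧ q 0 = x ∧ (∀ n, p n ∈ X) ∧ (∀ n, q n ∈ X) ∧
    (∀ n, le (p n) (p (n + 1)) ∧ p n ≠ p (n + 1)) ∧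
    (∀ n, le (q n) (q (n + 1)) ∧ q n ≠ q (n + 1)) ∧
    ∃ n m, ¬ le (p n) (q m) ∧ ¬ le (q m) (p n)}

noncomputable def poDerivIter {T : Type} (le : T → T → Prop) (α : Ordinal) : Set T :=
  Ordinal.limitRecOn α Set.univ (fun _ X => poDeriv le X)
    (fun o _ ih => ⋂ (β : Ordinal) (h : β < o), ih β h)

/-- The Cantor–Bendixson rank of a partial order tree. -/
noncomputable def CBrankPO {T : Type} (le : T → T → Prop) : Ordinal :=
  sInf {α | poDerivIter le (α + 1) = poDerivIter le α}

/-- The product of two successor trees, where `r₂` is the root of the second tree. -/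
def prodSucc {T₁ T₂ : Type} (S₁ : T₁ → T₁ → Prop) (S₂ : T₂ → T₂ → Prop) (r₂ : T₂) :
    T₁ × T₂ → T₁ × T₂ → Prop :=
  fun p q =>
    (p.2 = r₂ ∧ ((q.1 = p.1 ∧ S₂ p.2 q.2) ∨ (S₁ p.1 q.1 ∧ p.2 = q.2))) ∨
    (p.2 ≠ r₂ ∧ q.1 = p.1 ∧ S₂ p.2 q.2)

/-! ### Locally finite graphs -/

/-- A directed graph is locally finite if every vertex has finitely many neighbours
(in either direction). -/
def LocallyFiniteGraph {V : Type} (E : V → V → Prop) : Prop :=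
  ∀ x, {y | E x y ∨ E y x}.Finite

/-- A graph as a relational structure with one binary relation. -/
def graphRel {V : Type} (E : V → V → Prop) : (i : Fin 1) → (Fin 2 → V) → Prop :=
  fun _ t => E (t 0) (t 1)

/-- `ball E U n` is the `n`-neighbourhood of `U`: vertices reachable from `U` by `n` or fewer
edges (traversed in either direction). -/
def ball {V : Type} (E : V → V → Prop) (U : Set V) : ℕ → Set V
  | 0 => U
  | n + 1 => ball E U n ∪ {v | ∃ u ∈ ball E U n, E u v ∨ E v u}

/-- Connectivity with respect to the symmetrization of `E`. -/
def conn {V : Type} (E : V → V → Prop) : V → V → Prop :=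
  Relation.ReflTransGen fun u v => E u v ∨ E v u

/-- For every ordinal `α < ω₁^CK` there is a computable (decidable) well-founded binary
relation on the natural numbers whose ordinal height is exactly `α`. -/
theorem computable_wf_relation_of_height (α : Ordinal) (hα : α < omega1CK) :
    ∃ (r : ℕ → ℕ → Prop) (_ : ComputablePred fun p : ℕ × ℕ => r p.1 p.2)
      (hwf : WellFounded r), relHeight hwf = α := by
  classical
  have hc : IsComputableOrdinal α := by
    by_contra h
    exact absurd hα (not_lt.2 (csInf_le (OrderBot.bddBelow _) h))
  obtain ⟨A, r, cA, cr, hwo, htype⟩ := hc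
  haveI := hwo
  obtain ⟨f, hf, hfA⟩ := ComputablePred.computable_iff.1 cA
  obtain ⟨g, hg, hgr⟩ := ComputablePred.computable_iff.1 cr
  have hA : ∀ n, n ∈ A ↔ f n = true := fun n => iff_of_eq (congrFun hfA n)
  have hr : ∀ m n, r m n ↔ g (m, n) = true := fun m n => iff_of_eq (congrFun hgr (m, n))
  set s : ℕ → ℕ → Prop := fun m n =>
    ∃ m', m = m' + 1 ∧ m' ∈ A ∧ (n = 0 ∨ ∃ n', n = n' + 1 ∧ n' ∈ A ∧ r m' n') with hs
  set R : {n // n ∈ A} → {n // n ∈ A} → Prop := fun x y => r x.1 y.1 with hR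
  set tin : {n // n ∈ A} → Ordinal := fun x => Ordinal.typein R x with htin
  -- well-foundedness via a rank map
  set φ : ℕ → Ordinal := fun m =>
    Nat.casesOn m α fun m' => if h : m' ∈ A then tin ⟨m', h⟩ else 0 with hφ
  have hmono : ∀ ⦃m n : ℕ⦄, s m n → φ m < φ n := by
    rintro m n ⟨m', rfl, hm', hcase⟩
    have h1 : φ (m' + 1) = tin ⟨m', hm'⟩ := by simp [hφ, hm']
    rcases hcase with rfl | ⟨n', rfl, hn', hrel⟩
    · rw [h1]
      have := Ordinal.typein_lt_type R ⟨m', hm'⟩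
      rwa [htype] at this
    · have h2 : φ (n' + 1) = tin ⟨n', hn'⟩ := by simp [hφ, hn']
      rw [h1, h2, htin]
      exact (Ordinal.typein_lt_typein R).2 hrel
  have hwf : WellFounded s := Subrelation.wf (fun {a b} h => hmono h) (InvImage.wf φ Ordinal.lt_wf)
  -- rank computation on A-elements
  have wfR : WellFounded R := IsWellFounded.wf
  have key : ∀ x : {n // n ∈ A}, wfRank hwf (x.1 + 1) = tin x := by
    intro x
    induction x using wfR.induction with
    | _ x ih =>
      have h1 : wfRank hwf (x.1 + 1)
          = ⨆ b : {b // s b (x.1 + 1)}, Order.succ (wfRank hwf b.1) :=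
        (hwf.apply _).rank_eq
      rw [h1]
      apply le_antisymm
      · refine Ordinal.iSup_le ?_
        rintro ⟨b, m', rfl, hm', hcase⟩
        rcases hcase with habs | ⟨n', hn, hn', hrel⟩
        · exact absurd habs (Nat.succ_ne_zero _)
        · have hx : n' = x.1 := (Nat.succ_injective hn.symm)
          subst hx
          have hlt : R ⟨m', hm'⟩ x := hrel
          rw [ih ⟨m', hm'⟩ hlt, Order.succ_le_iff, htin]
          exact (Ordinal.typein_lt_typein R).2 hlt
      · refine le_of_forall_lt fun c hc => ?_
        have hc' : c < Ordinal.type R := hc.trans (Ordinal.typein_lt_type R x)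
        obtain ⟨y, rfl⟩ := Ordinal.typein_surj R hc'
        have hyx : R y x := (Ordinal.typein_lt_typein R).1 hc
        have hsb : s (y.1 + 1) (x.1 + 1) :=
          ⟨y.1, rfl, y.2, Or.inr ⟨x.1, rfl, x.2, hyx⟩⟩
        calc Ordinal.typein R y < Order.succ (wfRank hwf (y.1 + 1)) := by
              rw [ih y hyx, htin]; exact Order.lt_succ _
          _ ≤ _ := Ordinal.le_iSup _ (⟨y.1 + 1, hsb⟩ : {b // s b (x.1 + 1)})
  have rank0 : wfRank hwf 0 = α := by
    have h1 : wfRank hwf 0 = ⨆ b : {b // s b 0}, Order.succ (wfRank hwf b.1) :=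
      (hwf.apply _).rank_eq
    rw [h1]
    apply le_antisymm
    · refine Ordinal.iSup_le ?_
      rintro ⟨b, m', rfl, hm', hcase⟩
      rw [key ⟨m', hm'⟩, Order.succ_le_iff, htin, ← htype]
      exact Ordinal.typein_lt_type R ⟨m', hm'⟩
    · refine le_of_forall_lt fun c hc => ?_
      rw [← htype] at hc
      obtain ⟨y, rfl⟩ := Ordinal.typein_surj R hc
      have hsb : s (y.1 + 1) 0 := ⟨y.1, rfl, y.2, Or.inl rfl⟩
      calc Ordinal.typein R y < Order.succ (wfRank hwf (y.1 + 1)) := by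
            rw [key y, htin]; exact Order.lt_succ _
        _ ≤ _ := Ordinal.le_iSup _ (⟨y.1 + 1, hsb⟩ : {b // s b 0})
  -- the height is α
  have hheight : relHeight hwf = α := by
    unfold relHeight
    apply le_antisymm
    · refine Ordinal.iSup_le fun m => ?_
      match m with
      | 0 => exact rank0.le
      | m' + 1 =>
        by_cases hm' : m' ∈ A
        · rw [key ⟨m', hm'⟩, htin, ← htype]
          exact (Ordinal.typein_lt_type R ⟨m', hm'⟩).le
        · have h1 : wfRank hwf (m' + 1)
              = ⨆ b : {b // s b (m' + 1)}, Order.succ (wfRank hwf b.1) :=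
            (hwf.apply _).rank_eq
          rw [h1]
          refine Ordinal.iSup_le ?_
          rintro ⟨b, m'', rfl, hm'', hcase⟩
          rcases hcase with habs | ⟨n', hn, hn', _⟩
          · exact absurd habs (Nat.succ_ne_zero _)
          · exact absurd (Nat.succ_injective hn ▸ hn' : m' ∈ A) hm'
    · rw [← rank0]
      exact Ordinal.le_iSup _ 0
  -- computability
  have hcomp : ComputablePred fun p : ℕ × ℕ => s p.1 p.2 := by
    set χ : ℕ × ℕ → Bool := fun p =>
      decide (p.1 ≠ 0) && f (p.1 - 1) &&
        (decide (p.2 = 0) || (f (p.2 - 1) && g (p.1 - 1, p.2 - 1))) with hχ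
    have c1 : Computable fun p : ℕ × ℕ => p.1 - 1 :=
      ((Primrec.pred.comp Primrec.fst).of_eq fun p => by
        simp [Nat.pred_eq_sub_one]).to_comp
    have c2 : Computable fun p : ℕ × ℕ => p.2 - 1 :=
      ((Primrec.pred.comp Primrec.snd).of_eq fun p => by
        simp [Nat.pred_eq_sub_one]).to_comp
    have c3 : Computable fun p : ℕ × ℕ => decide (p.1 ≠ 0) :=
      ((Primrec.not.comp (Primrec.eq.comp Primrec.fst (Primrec.const 0)).decide).of_eq
        (fun p => by simp)).to_comp
    have c4 : Computable fun p : ℕ × ℕ => decide (p.2 = 0) :=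
      (Primrec.eq.comp Primrec.snd (Primrec.const 0)).decide.to_comp
    have c5 : Computable fun p : ℕ × ℕ => f (p.1 - 1) := hf.comp c1
    have c6 : Computable fun p : ℕ × ℕ => f (p.2 - 1) := hf.comp c2
    have c7 : Computable fun p : ℕ × ℕ => g (p.1 - 1, p.2 - 1) :=
      hg.comp ((c1.pair c2))
    have cand : Computable₂ (· && · : Bool → Bool → Bool) :=
      (Primrec.dom_bool₂ _).to_comp
    have cor : Computable₂ (· || · : Bool → Bool → Bool) :=
      (Primrec.dom_bool₂ _).to_comp
    have hcχ : Computable χ :=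
      cand.comp (cand.comp c3 c5) (cor.comp c4 (cand.comp c6 c7))
    refine ComputablePred.computable_iff.2 ⟨χ, hcχ, ?_⟩
    funext p
    obtain ⟨m, n⟩ := p
    simp only [hχ, hs]
    apply propext
    constructor
    · rintro ⟨m', rfl, hm', hcase⟩
      simp only [Nat.add_sub_cancel, Nat.succ_ne_zero, not_false_iff, decide_true,
        Bool.true_and, (hA m').1 hm', Bool.and_eq_true, Bool.or_eq_true,
        decide_eq_true_eq, Bool.true_eq]
      constructor
      · simp
      rcases hcase with rfl | ⟨n', rfl, hn', hrel⟩
      · left; rfl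
      · right
        simp [Nat.add_sub_cancel, (hA n').1 hn', (hr m' n').1 hrel]
    · intro h
      simp only [Bool.and_eq_true, Bool.or_eq_true, decide_eq_true_eq] at h
      obtain ⟨⟨hm0, hfm⟩, hcase⟩ := h
      obtain ⟨m', rfl⟩ := Nat.exists_eq_succ_of_ne_zero hm0
      refine ⟨m', rfl, (hA m').2 (by simpa using hfm), ?_⟩
      rcases hcase with rfl | ⟨hfn, hgn⟩
      · exact Or.inl rfl
      · rcases n with _ | n'
        · exact Or.inl rfl
        · refine Or.inr ⟨n', rfl, (hA n').2 (by simpa using hfn),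
            (hr m' n').2 (by simpa using hgn)⟩
  exact ⟨s, hcomp, hwf, hheight⟩

end AutoStruct
end

section
/- For any deterministic one-tape Turing machine there is a reversible deterministic (multi-tape) Turing machine which accepts the same language, where a deterministic Turing machine is reversible if every configuration has at most one predecessor under the step relation (equivalently, its configuration graph consists only of finite chains and chains of order type ω). -/
namespace AutoStruct

namespace RevTM

open Turing

inductive K3 | L | R | H
  deriving DecidableEq

instance : Fintype K3 :=
  ⟨{K3.L, K3.R, K3.H}, by rintro (_ | _ | _) <;> simp⟩

instance : Fintype Turing.Dir :=
  ⟨{Turing.Dir.left, Turing.Dir.right}, by rintro (_ | _) <;> simp⟩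

variable (Γ Λ : Type)

/-- Labels of the reversible machine. -/
inductive Lab where
  | start : Lab
  | go : Λ → Lab
  | act : Λ → Turing.TM0.Stmt Γ → Lab

variable {Γ Λ}

instance : Inhabited (Lab Γ Λ) := ⟨.start⟩

def stmtEquiv : Turing.TM0.Stmt Γ ≃ Turing.Dir ⊕ Γ where
  toFun s := match s with | .move d => .inl d | .write a => .inr a
  invFun s := match s with | .inl d => .move d | .inr a => .write a
  left_inv := by rintro (d | a) <;> rfl
  right_inv := by rintro (d | a) <;> rfl

instance [Fintype Γ] : Fintype (Turing.TM0.Stmt Γ) := Fintype.ofEquiv _ stmtEquiv.symm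

def labEquiv : Lab Γ Λ ≃ Unit ⊕ Λ ⊕ Λ × Turing.TM0.Stmt Γ where
  toFun s := match s with
    | .start => .inl ()
    | .go q => .inr (.inl q)
    | .act q st => .inr (.inr (q, st))
  invFun s := match s with
    | .inl _ => .start
    | .inr (.inl q) => .go q
    | .inr (.inr (q, st)) => .act q st
  left_inv := by rintro (_ | q | ⟨q, st⟩) <;> rfl
  right_inv := by rintro (⟨⟩ | q | ⟨q, st⟩) <;> rfl

instance [Fintype Γ] [Fintype Λ] : Fintype (Lab Γ Λ) := Fintype.ofEquiv _ labEquiv.symm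

variable (Γ Λ) in
/-- The stack alphabets. -/
abbrev Gam : K3 → Type
  | .L => Γ
  | .R => Γ
  | .H => Lab Γ Λ × (Γ × Option Γ)

instance [Inhabited Γ] : ∀ k, Inhabited (Gam Γ Λ k)
  | .L => ⟨(default : Γ)⟩
  | .R => ⟨(default : Γ)⟩
  | .H => ⟨(.start, default, none)⟩

instance [Fintype Γ] [Fintype Λ] : ∀ k, Fintype (Gam Γ Λ k)
  | .L => inferInstanceAs (Fintype Γ)
  | .R => inferInstanceAs (Fintype Γ)
  | .H => inferInstanceAs (Fintype (Lab Γ Λ × (Γ × Option Γ)))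

variable [Inhabited Γ] [Inhabited Λ]

/-- The reversible machine: every label first pushes a full record of the current
label and internal state onto the history stack `H`. -/
def M2 (M : Turing.TM0.Machine Γ Λ) : Lab Γ Λ → Turing.TM2.Stmt (Gam Γ Λ) (Lab Γ Λ) (Γ × Option Γ)
  | .start =>
      .push .H (fun s => (.start, s)) <|
      .pop .R (fun _ ob => (ob.getD default, ob)) <|
      .goto fun _ => .go default
  | .go q =>
      .push .H (fun s => (.go q, s)) <|
      .branch (fun s => (M q s.1).isSome)
        (.goto fun s => match M q s.1 with
          | some (q', st) => .act q' st
          | none => .go q)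
        .halt
  | .act q' (.write b) =>
      .push .H (fun s => (.act q' (.write b), s)) <|
      .load (fun s => (b, s.2)) <|
      .goto fun _ => .go q'
  | .act q' (.move .right) =>
      .push .H (fun s => (.act q' (.move .right), s)) <|
      .push .L (fun s => s.1) <|
      .pop .R (fun _ ob => (ob.getD default, ob)) <|
      .goto fun _ => .go q'
  | .act q' (.move .left) =>
      .push .H (fun s => (.act q' (.move .left), s)) <|
      .push .R (fun s => s.1) <|
      .pop .L (fun _ ob => (ob.getD default, ob)) <|
      .goto fun _ => .go q'

/-- Every step pushes onto the history stack the record of the previous label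
and internal state. -/
theorem stk_H (M : Turing.TM0.Machine Γ Λ) (l : Lab Γ Λ) (v : Γ × Option Γ)
    (S : ∀ k, List (Gam Γ Λ k)) :
    (Turing.TM2.stepAux (M2 M l) v S).stk .H = (l, v) :: S .H := by
  rcases l with _ | q | ⟨q, ⟨_ | _⟩ | b⟩ <;>
    simp [M2, Function.update] <;>
  · rcases (M q v.1).isSome with _ | _ <;> simp


/-- The simulation relation between TM0 configurations and configurations of the
reversible machine. -/
def tr (M : Turing.TM0.Machine Γ Λ) (c₀ : Turing.TM0.Cfg Γ Λ)
    (c₂ : Turing.TM2.Cfg (Gam Γ Λ) (Lab Γ Λ) (Γ × Option Γ)) : Prop :=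
  c₂.var.1 = c₀.Tape.head ∧
  Turing.ListBlank.mk (c₂.stk .L) = c₀.Tape.left ∧
  Turing.ListBlank.mk (c₂.stk .R) = c₀.Tape.right ∧
  c₂.l = if (M c₀.q c₀.Tape.head).isSome then some (.go c₀.q) else none

theorem headI_eq (l : List Γ) : l.head?.getD default = l.headI := by cases l <;> rfl

theorem step_to_tr (M : Turing.TM0.Machine Γ Λ) (q : Λ) (T : Turing.Tape Γ)
    (v : Γ × Option Γ) (S : ∀ k, List (Gam Γ Λ k))
    (h2 : v.1 = T.head)
    (hL : Turing.ListBlank.mk (S .L) = T.left)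
    (hR : Turing.ListBlank.mk (S .R) = T.right) :
    ∃ b₂, tr M ⟨q, T⟩ b₂ ∧
      StateTransition.Reaches (Turing.TM2.step (M2 M)) ⟨some (.go q), v, S⟩ b₂ := by
  cases e : M q T.head with
  | some x => exact ⟨⟨some (.go q), v, S⟩, ⟨h2, hL, hR, by simp [e]⟩, .refl⟩
  | none =>
    refine ⟨⟨none, v, Function.update S .H ((.go q, v) :: S .H)⟩,
      ⟨h2, by simpa [Function.update] using hL, by simpa [Function.update] using hR,
        by simp [e]⟩, Relation.ReflTransGen.single ?_⟩
    show Turing.TM2.step (M2 M) _ = some _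
    simp [M2, h2, e]

theorem respects (M : Turing.TM0.Machine Γ Λ) :
    StateTransition.Respects (Turing.TM0.step M) (Turing.TM2.step (M2 M)) (tr M) := by
  rintro ⟨q, a, LL, RR⟩ ⟨l, v, S⟩ ⟨h2, hL, hR, h1⟩
  dsimp only at h2 hL hR h1
  cases e : M q a with
  | none =>
    rw [show Turing.TM0.step M ⟨q, a, LL, RR⟩ = none by simp [Turing.TM0.step, e]]
    simp only [e, Option.isSome_none, Bool.false_eq_true, if_false] at h1
    subst h1
    rfl
  | some p =>
    obtain ⟨q', st⟩ := p
    simp only [e, Option.isSome_some, if_true] at h1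
    subst h1
    have step1 : Turing.TM2.step (M2 M) ⟨some (.go q), v, S⟩ =
        some ⟨some (.act q' st), v, Function.update S .H ((Lab.go q, v) :: S .H)⟩ := by
      simp [M2, h2, e]
    cases st with
    | write b =>
      rw [show Turing.TM0.step M ⟨q, a, LL, RR⟩ = some ⟨q', Turing.Tape.write b ⟨a, LL, RR⟩⟩
        by simp [Turing.TM0.step, e]]
      obtain ⟨b₂, hb₂, hreach⟩ := step_to_tr M q' (Turing.Tape.write b ⟨a, LL, RR⟩) (b, v.2)
        (Function.update (Function.update S .H ((Lab.go q, v) :: S .H)) .H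
          ((Lab.act q' (.write b), v) :: (Lab.go q, v) :: S .H))
        rfl (by simp [Turing.Tape.write, Function.update, hL])
        (by simp [Turing.Tape.write, Function.update, hR])
      refine ⟨b₂, hb₂, Relation.TransGen.head step1 (Relation.TransGen.head' ?_ hreach)⟩
      show Turing.TM2.step (M2 M) _ = some _
      simp [M2, Function.update]
    | move d =>
      rw [show Turing.TM0.step M ⟨q, a, LL, RR⟩ =
          some ⟨q', Turing.Tape.move d ⟨a, LL, RR⟩⟩ by simp [Turing.TM0.step, e]]
      cases d with
      | right =>
        obtain ⟨b₂, hb₂, hreach⟩ := step_to_tr M q' (Turing.Tape.move .right ⟨a, LL, RR⟩)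
          ((S .R).head?.getD default, (S .R).head?)
          (Function.update (Function.update
            (Function.update S .H ((Lab.act q' (.move .right), v) :: (Lab.go q, v) :: S .H))
            .L (v.1 :: S .L)) .R (S .R).tail)
          (by
            rw [show (Turing.Tape.move .right ⟨a, LL, RR⟩).head = RR.head from rfl, ← hR,
              Turing.ListBlank.head_mk, headI_eq])
          (by
            show Turing.ListBlank.mk _ = LL.cons a
            simp only [Function.update]
            simp only [show (K3.L = K3.R) = False by simp, show (K3.L = K3.H) = False by simp,
              dite_false, dite_true, reduceDIte]
            rw [h2, ← hL]
            exact (Turing.ListBlank.cons_mk a _)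
          )
          (by
            show Turing.ListBlank.mk _ = RR.tail
            simp only [Function.update]
            simp only [show (K3.R = K3.L) = False by simp, show (K3.R = K3.H) = False by simp,
              dite_false, dite_true, reduceDIte]
            rw [← hR, Turing.ListBlank.tail_mk]
          )
        refine ⟨b₂, hb₂, Relation.TransGen.head step1 (Relation.TransGen.head' ?_ hreach)⟩
        show Turing.TM2.step (M2 M) _ = some _
        simp [M2, Function.update]
      | left =>
        obtain ⟨b₂, hb₂, hreach⟩ := step_to_tr M q' (Turing.Tape.move .left ⟨a, LL, RR⟩)
          ((S .L).head?.getD default, (S .L).head?)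
          (Function.update (Function.update
            (Function.update S .H ((Lab.act q' (.move .left), v) :: (Lab.go q, v) :: S .H))
            .R (v.1 :: S .R)) .L (S .L).tail)
          (by
            rw [show (Turing.Tape.move .left ⟨a, LL, RR⟩).head = LL.head from rfl, ← hL,
              Turing.ListBlank.head_mk, headI_eq])
          (by
            show Turing.ListBlank.mk _ = LL.tail
            simp only [Function.update]
            simp only [show (K3.L = K3.R) = False by simp, show (K3.L = K3.H) = False by simp,
              dite_false, dite_true, reduceDIte]
            rw [← hL, Turing.ListBlank.tail_mk]
          )
          (by
            show Turing.ListBlank.mk _ = RR.cons a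
            simp only [Function.update]
            simp only [show (K3.R = K3.L) = False by simp, show (K3.R = K3.H) = False by simp,
              dite_false, dite_true, reduceDIte]
            rw [h2, ← hR]
            exact (Turing.ListBlank.cons_mk a _)
          )
        refine ⟨b₂, hb₂, Relation.TransGen.head step1 (Relation.TransGen.head' ?_ hreach)⟩
        show Turing.TM2.step (M2 M) _ = some _
        simp [M2, Function.update]


theorem init_reach (M : Turing.TM0.Machine Γ Λ) (l : List Γ) :
    ∃ b₂, tr M (Turing.TM0.init l) b₂ ∧
      StateTransition.Reaches (Turing.TM2.step (M2 M)) (Turing.TM2.init .R l) b₂ := by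
  obtain ⟨b₂, hb₂, hreach⟩ := step_to_tr M default (Turing.Tape.mk₁ l)
    (l.head?.getD default, l.head?)
    (Function.update (Function.update
      (Function.update (fun k => ([] : List (Gam Γ Λ k))) K3.R l)
      K3.H [(Lab.start, (default : Γ × Option Γ))]) K3.R l.tail)
    (by
      show l.head?.getD default = (Turing.ListBlank.mk l).head
      rw [Turing.ListBlank.head_mk, headI_eq])
    (by
      show Turing.ListBlank.mk _ = Turing.ListBlank.mk []
      simp [Function.update])
    (by
      show Turing.ListBlank.mk _ = (Turing.ListBlank.mk l).tail
      rw [Turing.ListBlank.tail_mk]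
      simp [Function.update])
  refine ⟨b₂, hb₂, Relation.ReflTransGen.head ?_ hreach⟩
  show Turing.TM2.step (M2 M) _ = some _
  simp [Turing.TM2.init, M2, Function.update, show (default : Lab Γ Λ) = .start from rfl]

theorem eval_dom (M : Turing.TM0.Machine Γ Λ) (l : List Γ) :
    (Turing.TM0.eval M l).Dom ↔ (Turing.TM2.eval (M2 M) .R l).Dom := by
  obtain ⟨b₂, hb₂, hreach⟩ := init_reach M l
  show (StateTransition.eval (Turing.TM0.step M) (Turing.TM0.init l)).Dom ↔
    (StateTransition.eval (Turing.TM2.step (M2 M)) (Turing.TM2.init .R l)).Dom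
  rw [StateTransition.reaches_eval hreach]
  exact (StateTransition.tr_eval_dom (respects M) hb₂).symm

theorem list_ext {α : Type} (l₁ l₂ : List α) (h1 : l₁.head? = l₂.head?)
    (h2 : l₁.tail = l₂.tail) : l₁ = l₂ := by
  cases l₁ <;> cases l₂ <;> simp_all

theorem step_injective (M : Turing.TM0.Machine Γ Λ)
    (c c₁ c₂ : Turing.TM2.Cfg (Gam Γ Λ) (Lab Γ Λ) (Γ × Option Γ))
    (h₁ : Turing.TM2.step (M2 M) c₁ = some c)
    (h₂ : Turing.TM2.step (M2 M) c₂ = some c) : c₁ = c₂ := by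
  obtain ⟨l₁, v₁, S₁⟩ := c₁
  obtain ⟨l₂, v₂, S₂⟩ := c₂
  cases l₁ with
  | none => exact absurd h₁ (by simp [Turing.TM2.step])
  | some l₁ =>
  cases l₂ with
  | none => exact absurd h₂ (by simp [Turing.TM2.step])
  | some l₂ =>
  simp only [Turing.TM2.step, Option.some.injEq] at h₁ h₂
  have hH : (l₁, v₁) :: S₁ .H = (l₂, v₂) :: S₂ .H := by
    rw [← stk_H M l₁ v₁ S₁, ← stk_H M l₂ v₂ S₂, h₁, h₂]
  simp only [List.cons.injEq, Prod.mk.injEq] at hH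
  obtain ⟨⟨hl, hv⟩, hSH⟩ := hH
  subst hl; subst hv
  have e : Turing.TM2.stepAux (M2 M l₁) v₁ S₁ = Turing.TM2.stepAux (M2 M l₁) v₁ S₂ :=
    h₁.trans h₂.symm
  suffices hS : S₁ = S₂ by rw [hS]
  have hLR : S₁ K3.L = S₂ K3.L ∧ S₁ K3.R = S₂ K3.R := by
    cases l₁ with
    | start =>
      have eL := congrArg (fun x => x.stk K3.L) e
      have eRh := congrArg (fun x => x.var.2) e
      have eRt := congrArg (fun x => x.stk K3.R) e
      simp [M2, Function.update] at eL eRh eRt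
      exact ⟨eL, list_ext _ _ eRh eRt⟩
    | go q =>
      have eL := congrArg (fun x => x.stk K3.L) e
      have eR := congrArg (fun x => x.stk K3.R) e
      cases hb : (M q v₁.1).isSome <;>
        simp [M2, hb, Function.update] at eL eR <;> exact ⟨eL, eR⟩
    | act q st =>
      cases st with
      | write b =>
        have eL := congrArg (fun x => x.stk K3.L) e
        have eR := congrArg (fun x => x.stk K3.R) e
        simp [M2, Function.update] at eL eR
        exact ⟨eL, eR⟩
      | move d =>
        cases d with
        | right =>
          have eL := congrArg (fun x => x.stk K3.L) e
          have eRh := congrArg (fun x => x.var.2) e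
          have eRt := congrArg (fun x => x.stk K3.R) e
          simp [M2, Function.update] at eL eRh eRt
          exact ⟨eL, list_ext _ _ eRh eRt⟩
        | left =>
          have eR := congrArg (fun x => x.stk K3.R) e
          have eLh := congrArg (fun x => x.var.2) e
          have eLt := congrArg (fun x => x.stk K3.L) e
          simp [M2, Function.update] at eR eLh eLt
          exact ⟨list_ext _ _ eLh eLt, eR⟩
  funext k
  cases k with
  | L => exact hLR.1
  | R => exact hLR.2
  | H => exact hSH

end RevTM

/-- **Lemma 7 (Bennett).** For any deterministic one-tape Turing machine there is a reversible
deterministic multi-tape Turing machine (here: a multi-stack machine in the `TM2` model, with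
an injective coding of the input alphabet) accepting the same language, where reversible
means that every configuration has at most one predecessor under the step relation. -/
theorem exists_reversible_turing_machine {Γ : Type} [Inhabited Γ] [Fintype Γ]
    {Λ : Type} [Inhabited Λ] [Fintype Λ] (M : Turing.TM0.Machine Γ Λ) :
    ∃ (K : Type) (_ : DecidableEq K) (_ : Fintype K)
      (Γ' : K → Type) (_ : ∀ k, Fintype (Γ' k))
      (Λ' : Type) (_ : Inhabited Λ') (_ : Fintype Λ')
      (σ : Type) (_ : Inhabited σ) (_ : Fintype σ)
      (M' : Λ' → Turing.TM2.Stmt Γ' Λ' σ)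
      (k₀ : K) (ι : Γ → Γ' k₀),
      Function.Injective ι ∧
      (∀ c c₁ c₂ : Turing.TM2.Cfg Γ' Λ' σ,
        Turing.TM2.step M' c₁ = some c → Turing.TM2.step M' c₂ = some c → c₁ = c₂) ∧
      (∀ l : List Γ, (Turing.TM0.eval M l).Dom ↔ (Turing.TM2.eval M' k₀ (l.map ι)).Dom) := by
  refine ⟨RevTM.K3, inferInstance, inferInstance, RevTM.Gam Γ Λ, inferInstance,
    RevTM.Lab Γ Λ, inferInstance, inferInstance, Γ × Option Γ, inferInstance, inferInstance,
    RevTM.M2 M, .R, id, fun _ _ h => h, RevTM.step_injective M, fun l => ?_⟩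
  rw [List.map_id]
  exact RevTM.eval_dom M l

end AutoStruct
end

section
/- If G = (V,E) is a locally finite directed graph, then the Scott rank of G is at most 3; in fact, for any finite tuples ā, b̄ from V of equal length with ā ≡² b̄, there is an automorphism of G mapping ā to b̄. -/
namespace AutoStruct

section Main
variable {V : Type} {E : V → V → Prop}

lemma ord12 : (1:Ordinal) < 2 := by norm_num
lemma ord23 : (2:Ordinal) < 3 := by
  have : ((2:ℕ):Ordinal) < ((3:ℕ):Ordinal) := by exact_mod_cast (by norm_num : (2:ℕ) < 3)
  simpa using this

lemma graphRel_iff {N : ℕ} (x : Fin N → V) (p q : Fin N) (i : Fin 1) :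
    graphRel E i (x ∘ ![p, q]) ↔ E (x p) (x q) := by
  simp [graphRel, Matrix.cons_val_zero, Matrix.cons_val_one, Matrix.head_cons]

lemma atom_pattern {N : ℕ} {x y : Fin N → V} (h : atomEquiv (graphRel E) x y) :
    ∀ i j : Fin N, (x i = x j ↔ y i = y j) ∧ (E (x i) (x j) ↔ E (y i) (y j)) := by
  intro i j
  refine ⟨h.1 i j, ?_⟩
  have := h.2 0 ![i, j]
  rwa [graphRel_iff, graphRel_iff] at this

lemma bf2_extract {k : ℕ} {a b : Fin k → V} (h : bfEquiv (graphRel E) 2 k a b)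
    (m : ℕ) (c : Fin m → V) :
    ∃ d : Fin m → V,
      (∀ i j : Fin (k+m),
        (Fin.append a c i = Fin.append a c j ↔ Fin.append b d i = Fin.append b d j)
        ∧ (E (Fin.append a c i) (Fin.append a c j) ↔ E (Fin.append b d i) (Fin.append b d j))) ∧
      (∀ w : V, ∃ w' : V,
        ∀ i : Fin (k+m),
          (Fin.append a c i = w' ↔ Fin.append b d i = w) ∧
          (E (Fin.append a c i) w' ↔ E (Fin.append b d i) w) ∧
          (E w' (Fin.append a c i) ↔ E w (Fin.append b d i))) := by
  rw [bfEquiv, if_neg (by norm_num : (2:Ordinal) ≠ 0)] at h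
  obtain ⟨d, H1⟩ := (h 1 (by norm_num)).1 m c
  rw [bfEquiv, if_neg (one_ne_zero)] at H1
  refine ⟨d, ?_, ?_⟩
  · obtain ⟨d₀, H0⟩ := (H1 0 zero_lt_one).1 0 Fin.elim0
    rw [bfEquiv, if_pos rfl] at H0
    intro i j
    have := atom_pattern H0 (Fin.castAdd 0 i) (Fin.castAdd 0 j)
    simp only [Fin.append_left] at this
    exact this
  · intro w
    obtain ⟨c', H0⟩ := (H1 0 zero_lt_one).2 1 (fun _ => w)
    rw [bfEquiv, if_pos rfl] at H0
    refine ⟨c' 0, ?_⟩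
    intro i
    have h1 := atom_pattern H0 (Fin.castAdd 1 i) (Fin.natAdd (k+m) 0)
    have h2 := atom_pattern H0 (Fin.natAdd (k+m) 0) (Fin.castAdd 1 i)
    simp only [Fin.append_left, Fin.append_right] at h1 h2
    exact ⟨h1.1, h1.2, h2.2⟩

/-! Part 0: balls and connectivity -/

lemma conn_refl (v : V) : conn E v v := Relation.ReflTransGen.refl

lemma conn_symm {u v : V} (h : conn E u v) : conn E v u :=
  @Std.Symm.symm _ _ (@Relation.ReflTransGen.stdSymm _ _ ⟨fun _ _ h => Or.symm h⟩) _ _ h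

lemma conn_trans {u v w : V} (h : conn E u v) (h' : conn E v w) : conn E u w :=
  Relation.ReflTransGen.trans h h'

/-- The connectivity setoid. -/
def connSetoid (E : V → V → Prop) : Setoid V :=
  ⟨conn E, ⟨conn_refl, conn_symm, conn_trans⟩⟩

lemma ball_mono_succ (U : Set V) (n : ℕ) : ball E U n ⊆ ball E U (n+1) :=
  Set.subset_union_left

lemma ball_mono (U : Set V) {n m : ℕ} (h : n ≤ m) : ball E U n ⊆ ball E U m := by
  induction h with
  | refl => exact subset_rfl
  | step _h ih => exact fun x hx => ball_mono_succ U _ (ih hx)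

lemma ball_subset_ball (U : Set V) {n : ℕ} : U ⊆ ball E U n :=
  ball_mono U (Nat.zero_le n)

lemma ball_finite (hlf : LocallyFiniteGraph E) {U : Set V} (hU : U.Finite) (n : ℕ) :
    (ball E U n).Finite := by
  induction n with
  | zero => exact hU
  | succ n ih =>
    refine Set.Finite.union ih ?_
    have : {v | ∃ u ∈ ball E U n, E u v ∨ E v u} ⊆ ⋃ u ∈ ball E U n, {v | E u v ∨ E v u} := by
      intro v ⟨u, hu, he⟩
      exact Set.mem_biUnion hu he
    exact Set.Finite.subset (Set.Finite.biUnion ih fun u _ => hlf u) this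

lemma mem_ball_conn {U : Set V} {n : ℕ} : ∀ {v : V}, v ∈ ball E U n →
    ∃ u ∈ U, conn E u v := by
  induction n with
  | zero => exact fun h => ⟨_, h, conn_refl _⟩
  | succ n ih =>
    intro v h
    rcases h with h | ⟨u, hu, he⟩
    · exact ih h
    · obtain ⟨u₀, hu₀, hc⟩ := ih hu
      exact ⟨u₀, hu₀, Relation.ReflTransGen.tail hc he⟩

lemma conn_mem_ball {u v : V} (h : conn E u v) {U : Set V} (hu : u ∈ U) :
    ∃ n, v ∈ ball E U n := by
  induction h with
  | refl => exact ⟨0, hu⟩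
  | tail _hc he ih =>
    obtain ⟨n, hn⟩ := ih
    exact ⟨n + 1, Or.inr ⟨_, hn, he⟩⟩

/-! Components and isomorphism of components -/

/-- The component of the class `q`, as a set. -/
def Cset (E : V → V → Prop) (q : Quotient (connSetoid E)) : Set V :=
  {v | Quotient.mk (connSetoid E) v = q}

lemma mem_Cset {v w : V} : v ∈ Cset E (Quotient.mk (connSetoid E) w) ↔ conn E w v := by
  constructor
  · intro h; exact conn_symm (Quotient.eq.mp h)
  · intro h; exact Quotient.sound (conn_symm h)

lemma self_mem_Cset (v : V) : v ∈ Cset E (Quotient.mk (connSetoid E) v) := rfl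

/-- Isomorphism of two components. -/
def Riso (E : V → V → Prop) (q r : Quotient (connSetoid E)) : Prop :=
  ∃ e : V → V, Set.InjOn e (Cset E q) ∧ e '' Cset E q = Cset E r ∧
    ∀ x ∈ Cset E q, ∀ y ∈ Cset E q, (E x y ↔ E (e x) (e y))

lemma Riso_refl (q : Quotient (connSetoid E)) : Riso E q q :=
  ⟨id, Set.injOn_id _, Set.image_id _, fun _ _ _ _ => Iff.rfl⟩

lemma Riso_symm {q r : Quotient (connSetoid E)} (h : Riso E q r) : Riso E r q := by
  obtain ⟨e, hinj, himg, hedge⟩ := h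
  haveI : Nonempty V := ⟨q.out⟩
  set e' := Function.invFunOn e (Cset E q) with he'
  have hkey : ∀ x₀ ∈ Cset E q, e' (e x₀) = x₀ := fun x₀ h =>
    hinj (Function.invFunOn_mem ⟨x₀, h, rfl⟩) h (Function.invFunOn_eq ⟨x₀, h, rfl⟩)
  have hmem : ∀ x₀ ∈ Cset E q, e' (e x₀) ∈ Cset E q := fun x₀ h => by
    rw [hkey x₀ h]; exact h
  refine ⟨e', ?_, ?_, ?_⟩
  · intro x hx y hy hxy
    rw [← himg] at hx hy
    obtain ⟨x₀, hx₀, rfl⟩ := hx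
    obtain ⟨y₀, hy₀, rfl⟩ := hy
    rw [hkey x₀ hx₀, hkey y₀ hy₀] at hxy
    rw [hxy]
  · rw [← himg]
    ext z
    constructor
    · rintro ⟨x, ⟨x₀, hx₀, rfl⟩, rfl⟩
      rw [hkey x₀ hx₀]; exact hx₀
    · intro hz
      exact ⟨e z, ⟨z, hz, rfl⟩, hkey z hz⟩
  · intro x hx y hy
    rw [← himg] at hx hy
    obtain ⟨x₀, hx₀, rfl⟩ := hx
    obtain ⟨y₀, hy₀, rfl⟩ := hy
    rw [hkey x₀ hx₀, hkey y₀ hy₀]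
    exact (hedge x₀ hx₀ y₀ hy₀).symm

lemma Riso_trans {q r t : Quotient (connSetoid E)} (h : Riso E q r) (h' : Riso E r t) :
    Riso E q t := by
  obtain ⟨e, hinj, himg, hedge⟩ := h
  obtain ⟨e', hinj', himg', hedge'⟩ := h'
  refine ⟨e' ∘ e, ?_, ?_, ?_⟩
  · exact hinj'.comp hinj (himg ▸ Set.mapsTo_image e _)
  · rw [Set.image_comp, himg, himg']
  · intro x hx y hy
    have hex : e x ∈ Cset E r := himg ▸ Set.mem_image_of_mem e hx
    have hey : e y ∈ Cset E r := himg ▸ Set.mem_image_of_mem e hy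
    exact (hedge x hx y hy).trans (hedge' _ hex _ hey)

/-- The setoid of isomorphism of components. -/
def isoSetoid (E : V → V → Prop) : Setoid (Quotient (connSetoid E)) :=
  ⟨Riso E, ⟨Riso_refl, Riso_symm, Riso_trans⟩⟩

/-! The inverse system of finite approximations -/

open Classical in
/-- Restriction of a candidate map to a ball, extended by the identity. -/
noncomputable def restr (E : V → V → Prop) {k : ℕ} (a : Fin k → V) (m : ℕ) (f : V → V) :
    V → V :=
  fun v => if v ∈ ball E (Set.range a) m then f v else v

/-- The set of finite approximations at level `n`. -/
def ISet (E : V → V → Prop) {k : ℕ} (a b : Fin k → V) (n : ℕ) : Set (V → V) :=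
  {f | (∀ i, f (a i) = b i) ∧ Set.InjOn f (ball E (Set.range a) n) ∧
    (∀ x ∈ ball E (Set.range a) n, ∀ y ∈ ball E (Set.range a) n, (E x y ↔ E (f x) (f y))) ∧
    f '' ball E (Set.range a) n = ball E (Set.range b) n ∧
    (∀ v, v ∉ ball E (Set.range a) n → f v = v)}

variable {k : ℕ} {a b : Fin k → V}

lemma ISet_maps {n : ℕ} {f : V → V} (hf : f ∈ ISet E a b n) :
    ∀ m, m ≤ n → f '' ball E (Set.range a) m ⊆ ball E (Set.range b) m := by
  obtain ⟨hab, _hinj, hedge, _himg, _hid⟩ := hf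
  intro m
  induction m with
  | zero =>
    rintro _ _ ⟨x, ⟨i, rfl⟩, rfl⟩
    exact ⟨i, (hab i).symm⟩
  | succ m ih =>
    intro hm
    rintro _ ⟨x, hx, rfl⟩
    rcases hx with hx | ⟨y, hy, he⟩
    · exact ball_mono_succ _ _ (ih (Nat.le_of_succ_le hm) ⟨x, hx, rfl⟩)
    · have hyS : y ∈ ball E (Set.range a) n := ball_mono _ (Nat.le_of_succ_le hm) hy
      have hxS : x ∈ ball E (Set.range a) n :=
        ball_mono _ hm (Or.inr ⟨y, hy, he⟩)
      have hfy : f y ∈ ball E (Set.range b) m := ih (Nat.le_of_succ_le hm) ⟨y, hy, rfl⟩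
      refine Or.inr ⟨f y, hfy, ?_⟩
      rcases he with he | he
      · exact Or.inl ((hedge y hyS x hxS).mp he)
      · exact Or.inr ((hedge x hxS y hyS).mp he)

lemma ISet_onto {n : ℕ} {f : V → V} (hf : f ∈ ISet E a b n) :
    ∀ m, m ≤ n → ball E (Set.range b) m ⊆ f '' ball E (Set.range a) m := by
  have hf' := hf
  obtain ⟨hab, hinj, hedge, himg, _hid⟩ := hf'
  intro m
  induction m with
  | zero =>
    intro _hm w hw
    obtain ⟨i, rfl⟩ := (hw : w ∈ Set.range b)
    exact ⟨a i, ⟨i, rfl⟩, hab i⟩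
  | succ m ih =>
    intro hm
    intro w hw
    rcases hw with hw | ⟨z, hz, he⟩
    · obtain ⟨x, hx, rfl⟩ := ih (Nat.le_of_succ_le hm) hw
      exact ⟨x, ball_mono_succ _ _ hx, rfl⟩
    · obtain ⟨y, hy, rfl⟩ := ih (Nat.le_of_succ_le hm) hz
      -- w ∈ ball E (range b) n, so w = f x for some x ∈ ball E (range a) n
      have hwn : w ∈ ball E (Set.range b) n := by
        refine ball_mono _ hm (Or.inr ⟨f y, hz, he⟩)
      rw [← himg] at hwn
      obtain ⟨x, hxn, rfl⟩ := hwn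
      have hyn : y ∈ ball E (Set.range a) n := ball_mono _ (Nat.le_of_succ_le hm) hy
      have hex : x ∈ ball E (Set.range a) (m+1) := by
        refine Or.inr ⟨y, hy, ?_⟩
        rcases he with he | he
        · exact Or.inl ((hedge y hyn x hxn).mpr he)
        · exact Or.inr ((hedge x hxn y hyn).mpr he)
      exact ⟨x, hex, rfl⟩

lemma ISet_image {n : ℕ} {f : V → V} (hf : f ∈ ISet E a b n) {m : ℕ} (hm : m ≤ n) :
    f '' ball E (Set.range a) m = ball E (Set.range b) m :=
  subset_antisymm (ISet_maps hf m hm) (ISet_onto hf m hm)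

lemma restr_mem {n m : ℕ} (hm : m ≤ n) {f : V → V} (hf : f ∈ ISet E a b n) :
    restr E a m f ∈ ISet E a b m := by
  classical
  have heq : ∀ v ∈ ball E (Set.range a) m, restr E a m f v = f v := by
    intro v hv; simp only [restr, if_pos hv]
  obtain ⟨hab, hinj, hedge, _himg, _hid⟩ := hf
  refine ⟨?_, ?_, ?_, ?_, ?_⟩
  · intro i
    rw [heq _ (ball_subset_ball _ ⟨i, rfl⟩)]
    exact hab i
  · intro x hx y hy hxy
    rw [heq _ hx, heq _ hy] at hxy
    exact hinj (ball_mono _ hm hx) (ball_mono _ hm hy) hxy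
  · intro x hx y hy
    rw [heq _ hx, heq _ hy]
    exact hedge x (ball_mono _ hm hx) y (ball_mono _ hm hy)
  · rw [Set.image_congr heq]
    exact ISet_image ⟨hab, hinj, hedge, _himg, _hid⟩ hm
  · intro v hv
    simp only [restr, if_neg hv]

lemma ISet_nonempty (hlf : LocallyFiniteGraph E) (h : bfEquiv (graphRel E) 2 k a b) (n : ℕ) :
    (ISet E a b n).Nonempty := by
  classical
  set S := ball E (Set.range a) (n+1) with hSdef
  have hSfin : S.Finite := ball_finite hlf (Set.finite_range a) (n+1)
  set m := hSfin.toFinset.card with hm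
  set eqv := hSfin.toFinset.equivFin with heqv
  set c : Fin m → V := fun i => ((eqv.symm i) : V) with hc
  have hcmem : ∀ i, c i ∈ S := fun i => hSfin.mem_toFinset.mp (eqv.symm i).2
  have hcinj : Function.Injective c := fun i j hij => eqv.symm.injective (Subtype.ext hij)
  have henum : ∀ x, x ∈ S → ∃ i, c i = x := fun x hx =>
    ⟨eqv ⟨x, hSfin.mem_toFinset.mpr hx⟩, by simp [hc]⟩
  obtain ⟨d, hpat, hback⟩ := bf2_extract h m c
  have hpair : ∀ j j' : Fin m, (c j = c j' ↔ d j = d j') ∧ (E (c j) (c j') ↔ E (d j) (d j')) := by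
    intro j j'
    have := hpat (Fin.natAdd k j) (Fin.natAdd k j')
    simpa only [Fin.append_right] using this
  have hmix : ∀ (j : Fin m) (i : Fin k), (c j = a i ↔ d j = b i) := by
    intro j i
    have := (hpat (Fin.natAdd k j) (Fin.castAdd m i)).1
    simpa only [Fin.append_right, Fin.append_left] using this
  set D : V → V := fun x => if hx : x ∈ S then d (Classical.choose (henum x hx)) else x with hD
  have hidx : ∀ x (hx : x ∈ S), c (Classical.choose (henum x hx)) = x :=
    fun x hx => Classical.choose_spec (henum x hx)
  have hDeq : ∀ x (hx : x ∈ S), D x = d (Classical.choose (henum x hx)) := by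
    intro x hx; simp only [hD, dif_pos hx]
  have hDa : ∀ i, D (a i) = b i := by
    intro i
    have hx : a i ∈ S := ball_subset_ball _ ⟨i, rfl⟩
    rw [hDeq _ hx, ← (hmix _ i).mp (hidx _ hx)]
  have hDinj : Set.InjOn D S := by
    intro x hx y hy hxy
    rw [hDeq _ hx, hDeq _ hy] at hxy
    have := (hpair _ _).1.mpr hxy
    rwa [hidx _ hx, hidx _ hy] at this
  have hDedge : ∀ x, x ∈ S → ∀ y, y ∈ S → (E x y ↔ E (D x) (D y)) := by
    intro x hx y hy
    rw [hDeq _ hx, hDeq _ hy]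
    have := (hpair (Classical.choose (henum x hx)) (Classical.choose (henum y hy))).2
    rwa [hidx _ hx, hidx _ hy] at this
  have hDsub : ∀ r, r ≤ n+1 → D '' ball E (Set.range a) r ⊆ ball E (Set.range b) r := by
    intro r
    induction r with
    | zero =>
      rintro _ _ ⟨x, ⟨i, rfl⟩, rfl⟩
      exact ⟨i, (hDa i).symm⟩
    | succ r ih =>
      intro hr
      rintro _ ⟨x, hx, rfl⟩
      rcases hx with hx | ⟨y, hy, he⟩
      · exact ball_mono_succ _ _ (ih (Nat.le_of_succ_le hr) ⟨x, hx, rfl⟩)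
      · have hyS : y ∈ S := ball_mono _ (Nat.le_of_succ_le hr) hy
        have hxS : x ∈ S := ball_mono _ hr (Or.inr ⟨y, hy, he⟩)
        have hfy : D y ∈ ball E (Set.range b) r := ih (Nat.le_of_succ_le hr) ⟨y, hy, rfl⟩
        refine Or.inr ⟨D y, hfy, ?_⟩
        rcases he with he | he
        · exact Or.inl ((hDedge y hyS x hxS).mp he)
        · exact Or.inr ((hDedge x hxS y hyS).mp he)
  have hDsup : ∀ r, r ≤ n → ball E (Set.range b) r ⊆ D '' ball E (Set.range a) r := by
    intro r
    induction r with
    | zero =>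
      intro _hr w hw
      obtain ⟨i, rfl⟩ := (hw : w ∈ Set.range b)
      exact ⟨a i, ⟨i, rfl⟩, hDa i⟩
    | succ r ih =>
      intro hr w hw
      rcases hw with hw | ⟨z, hz, he⟩
      · obtain ⟨x, hx, rfl⟩ := ih (Nat.le_of_succ_le hr) hw
        exact ⟨x, ball_mono_succ _ _ hx, rfl⟩
      · obtain ⟨x, hx, rfl⟩ := ih (Nat.le_of_succ_le hr) hz
        have hxS : x ∈ S := ball_mono _ (by omega : r ≤ n+1) hx
        obtain ⟨w', hw'⟩ := hback w
        set jx := Classical.choose (henum x hxS) with hjx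
        have hcx : c jx = x := hidx _ hxS
        have hdx : d jx = D x := (hDeq _ hxS).symm
        have hw'x := hw' (Fin.natAdd k jx)
        simp only [Fin.append_right, hcx, hdx] at hw'x
        have hW : w' ∈ ball E (Set.range a) (r+1) := by
          refine Or.inr ⟨x, hx, ?_⟩
          rcases he with he | he
          · exact Or.inl (hw'x.2.1.mpr he)
          · exact Or.inr (hw'x.2.2.mpr he)
        have hW' : w' ∈ S := ball_mono _ (by omega : r+1 ≤ n+1) hW
        set jw := Classical.choose (henum w' hW') with hjw
        have hcw : c jw = w' := hidx _ hW'
        have h1 := (hw' (Fin.natAdd k jw)).1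
        simp only [Fin.append_right] at h1
        have hdw : d jw = w := h1.mp hcw
        refine ⟨w', hW, ?_⟩
        rw [hDeq _ hW', ← hjw, hdw]
  refine ⟨restr E a n D, ?_, ?_, ?_, ?_, ?_⟩
  · intro i
    have hx : a i ∈ ball E (Set.range a) n := ball_subset_ball _ ⟨i, rfl⟩
    simp only [restr, if_pos hx]
    exact hDa i
  · intro x hx y hy hxy
    simp only [restr, if_pos hx, if_pos hy] at hxy
    exact hDinj (ball_mono_succ _ _ hx) (ball_mono_succ _ _ hy) hxy
  · intro x hx y hy
    simp only [restr, if_pos hx, if_pos hy]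
    exact hDedge x (ball_mono_succ _ _ hx) y (ball_mono_succ _ _ hy)
  · have heq : ∀ v ∈ ball E (Set.range a) n, restr E a n D v = D v := by
      intro v hv; simp only [restr, if_pos hv]
    rw [Set.image_congr heq]
    exact subset_antisymm (hDsub n (Nat.le_succ n)) (hDsup n le_rfl)
  · intro v hv
    simp only [restr, if_neg hv]

open CategoryTheory in
/-- The inverse system of finite approximations. -/
noncomputable def Fsys (E : V → V → Prop) {k : ℕ} (a b : Fin k → V) : ℕᵒᵖ ⥤ Type where
  obj n := ↥(ISet E a b n.unop)
  map {n m} h := TypeCat.ofHom fun f => ⟨restr E a m.unop f.1, restr_mem (leOfHom h.unop) f.2⟩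
  map_id n := by
    refine ConcreteCategory.hom_ext _ _ fun f => ?_
    apply Subtype.ext
    funext v
    obtain ⟨_, _, _, _, hid⟩ := f.2
    by_cases hv : v ∈ ball E (Set.range a) n.unop
    · simp only [TypeCat.ofHom_apply, restr, if_pos hv]
      rfl
    · simp only [TypeCat.ofHom_apply, types_id_apply, restr, if_neg hv]
      exact (hid v hv).symm
  map_comp {n m p} g g' := by
    refine ConcreteCategory.hom_ext _ _ fun f => ?_
    apply Subtype.ext
    funext v
    by_cases hv : v ∈ ball E (Set.range a) p.unop
    · have hv' : v ∈ ball E (Set.range a) m.unop := ball_mono _ (leOfHom g'.unop) hv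
      simp only [restr, if_pos hv, if_pos hv', types_comp_apply, TypeCat.ofHom_apply]
    · simp only [types_comp_apply, restr, if_neg hv, TypeCat.ofHom_apply]

lemma ISet_finite (hlf : LocallyFiniteGraph E) (n : ℕ) : Finite ↥(ISet E a b n) := by
  classical
  have hA : (ball E (Set.range a) n).Finite := ball_finite hlf (Set.finite_range a) n
  have hB : (ball E (Set.range b) n).Finite := ball_finite hlf (Set.finite_range b) n
  haveI := hA.to_subtype
  haveI := hB.to_subtype
  refine Finite.of_injective (fun f : ↥(ISet E a b n) =>
    (fun x : ↥(ball E (Set.range a) n) =>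
      (⟨f.1 x.1, f.2.2.2.2.1 ▸ Set.mem_image_of_mem f.1 x.2⟩ : ↥(ball E (Set.range b) n)))) ?_
  intro f g hfg
  apply Subtype.ext
  funext v
  by_cases hv : v ∈ ball E (Set.range a) n
  · have := congrFun hfg ⟨v, hv⟩
    exact congrArg Subtype.val this
  · rw [f.2.2.2.2.2 v hv, g.2.2.2.2.2 v hv]

open CategoryTheory in
lemma exists_coherent (hlf : LocallyFiniteGraph E) (h : bfEquiv (graphRel E) 2 k a b) :
    ∃ f : ℕ → (V → V), (∀ n, f n ∈ ISet E a b n) ∧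
      ∀ m n, m ≤ n → ∀ v ∈ ball E (Set.range a) m, f m v = f n v := by
  haveI : ∀ n : ℕᵒᵖ, Finite ((Fsys E a b).obj n) := fun n => ISet_finite hlf n.unop
  haveI : ∀ n : ℕᵒᵖ, Nonempty ((Fsys E a b).obj n) := fun n =>
    (ISet_nonempty hlf h n.unop).to_subtype
  obtain ⟨u, hu⟩ := nonempty_sections_of_finite_inverse_system (Fsys E a b)
  refine ⟨fun n => (u (Opposite.op n)).1, fun n => (u (Opposite.op n)).2, ?_⟩
  intro m n hmn v hv
  have := hu ((homOfLE hmn).op : Opposite.op n ⟶ Opposite.op m)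
  have h2 := congrArg Subtype.val this
  have h3 := congrFun h2 v
  simp only [Fsys, restr, if_pos hv, TypeCat.ofHom_apply] at h3
  exact ((show restr E a m (u (Opposite.op n)).1 v = _ from if_pos hv).symm.trans h3).symm

/-- The connected closure of the range of a tuple. -/
def Xset (E : V → V → Prop) {k : ℕ} (a : Fin k → V) : Set V := {v | ∃ i, conn E (a i) v}

lemma Xset_iff_ball {v : V} : v ∈ Xset E a ↔ ∃ n, v ∈ ball E (Set.range a) n := by
  constructor
  · rintro ⟨i, hc⟩; exact conn_mem_ball hc ⟨i, rfl⟩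
  · rintro ⟨n, hn⟩
    obtain ⟨u, ⟨i, rfl⟩, hc⟩ := mem_ball_conn hn
    exact ⟨i, hc⟩

lemma Xset_closed {v w : V} (hv : v ∈ Xset E a) (hc : conn E v w) : w ∈ Xset E a :=
  ⟨hv.choose, conn_trans hv.choose_spec hc⟩

lemma Xset_closed_edge {v w : V} (hv : v ∈ Xset E a) (he : E v w ∨ E w v) : w ∈ Xset E a :=
  Xset_closed hv (Relation.ReflTransGen.single he)

lemma exists_phi (hlf : LocallyFiniteGraph E) (h : bfEquiv (graphRel E) 2 k a b) :
    ∃ p : V → V, (∀ i, p (a i) = b i) ∧ Set.InjOn p (Xset E a) ∧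
      (∀ x ∈ Xset E a, ∀ y ∈ Xset E a, (E x y ↔ E (p x) (p y))) ∧
      p '' Xset E a = Xset E b := by
  classical
  obtain ⟨f, hf, hcoh⟩ := exists_coherent hlf h
  set p : V → V := fun v =>
    if hv : ∃ n, v ∈ ball E (Set.range a) n then f (Classical.choose hv) v else v with hp
  have hpf : ∀ (n : ℕ) (v : V), v ∈ ball E (Set.range a) n → p v = f n v := by
    intro n v hv
    have hex : ∃ N, v ∈ ball E (Set.range a) N := ⟨n, hv⟩
    simp only [hp, dif_pos hex]
    have hN := Classical.choose_spec hex
    set N := Classical.choose hex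
    rcases le_total N n with hle | hle
    · rw [hcoh N n hle v hN]
    · rw [← hcoh n N hle v hv]
  refine ⟨p, ?_, ?_, ?_, ?_⟩
  · intro i
    rw [hpf 0 (a i) ⟨i, rfl⟩]
    exact (hf 0).1 i
  · intro x hx y hy hxy
    obtain ⟨nx, hnx⟩ := Xset_iff_ball.mp hx
    obtain ⟨ny, hny⟩ := Xset_iff_ball.mp hy
    have hx' : x ∈ ball E (Set.range a) (max nx ny) := ball_mono _ (le_max_left _ _) hnx
    have hy' : y ∈ ball E (Set.range a) (max nx ny) := ball_mono _ (le_max_right _ _) hny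
    rw [hpf _ x hx', hpf _ y hy'] at hxy
    exact (hf _).2.1 hx' hy' hxy
  · intro x hx y hy
    obtain ⟨nx, hnx⟩ := Xset_iff_ball.mp hx
    obtain ⟨ny, hny⟩ := Xset_iff_ball.mp hy
    have hx' := ball_mono _ (le_max_left nx ny) hnx
    have hy' := ball_mono _ (le_max_right nx ny) hny
    rw [hpf _ x hx', hpf _ y hy']
    exact (hf _).2.2.1 x hx' y hy'
  · apply subset_antisymm
    · rintro _ ⟨x, hx, rfl⟩
      obtain ⟨n, hn⟩ := Xset_iff_ball.mp hx
      rw [hpf n x hn]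
      have : f n x ∈ ball E (Set.range b) n := (hf n).2.2.2.1 ▸ Set.mem_image_of_mem _ hn
      exact Xset_iff_ball.mpr ⟨n, this⟩
    · intro w hw
      obtain ⟨n, hn⟩ := Xset_iff_ball.mp hw
      rw [← (hf n).2.2.2.1] at hn
      obtain ⟨x, hx, rfl⟩ := hn
      exact ⟨x, Xset_iff_ball.mpr ⟨n, hx⟩, hpf n x hx⟩

/-- Abstract matching lemma: if two tuples in a type with an equivalence relation are
pointwise equivalent and have the same kernel, then the complements of their ranges are
in equivalence-preserving bijection. -/
lemma matching_compl {Q' : Type} (t : Setoid Q') {κ : ℕ} (α β : Fin κ → Q')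
    (hker : ∀ i j, α i = α j ↔ β i = β j)
    (hiso : ∀ i, t.r (α i) (β i)) :
    ∃ γ : {q : Q' // q ∉ Set.range α} ≃ {q : Q' // q ∉ Set.range β},
      ∀ q, t.r q.1 (γ q).1 := by
  classical
  have hclass : ∀ i, Quotient.mk t (α i) = Quotient.mk t (β i) :=
    fun i => Quotient.sound (hiso i)
  set π : Q' → Quotient t := Quotient.mk t with hπ
  -- the per-class complement equivalences
  have hcompl : ∀ c : Quotient t,
      Nonempty (↥({x : {q : Q' // π q = c} | ∃ i, α i = x.1}ᶜ) ≃
        ↥({x : {q : Q' // π q = c} | ∃ i, β i = x.1}ᶜ)) := by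
    intro c
    set Tc := {q : Q' // π q = c}
    set UX : Set Tc := {x | ∃ i, α i = x.1} with hUX
    set UY : Set Tc := {x | ∃ i, β i = x.1} with hUY
    have hXY : ∀ x : ↥UX, π (β (Classical.choose x.2)) = c := by
      intro x
      rw [← hclass, Classical.choose_spec x.2]
      exact x.1.2
    have hYX : ∀ y : ↥UY, π (α (Classical.choose y.2)) = c := by
      intro y
      rw [hclass, Classical.choose_spec y.2]
      exact y.1.2
    set F : ↥UX → ↥UY := fun x =>
      ⟨⟨β (Classical.choose x.2), hXY x⟩, ⟨Classical.choose x.2, rfl⟩⟩ with hF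
    have hFbij : Function.Bijective F := by
      constructor
      · intro x x' hxx'
        have h1 : β (Classical.choose x.2) = β (Classical.choose x'.2) :=
          congrArg (Subtype.val ∘ Subtype.val) hxx'
        have h2 := (hker _ _).mpr h1
        rw [Classical.choose_spec x.2, Classical.choose_spec x'.2] at h2
        exact Subtype.ext (Subtype.ext h2)
      · intro y
        have hj : β (Classical.choose y.2) = y.1.1 := Classical.choose_spec y.2
        refine ⟨⟨⟨α (Classical.choose y.2), hYX y⟩, ⟨Classical.choose y.2, rfl⟩⟩, ?_⟩
        have key : ∀ (hh : ∃ i, α i = α (Classical.choose y.2)),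
            β (Classical.choose hh) = y.1.1 := by
          intro hh
          have hspec := Classical.choose_spec hh
          rw [(hker _ _).mp hspec, hj]
        exact Subtype.ext (Subtype.ext (key ⟨Classical.choose y.2, rfl⟩))
    haveI hfinX : Finite ↥UX := by
      refine Finite.of_injective (fun x : ↥UX => Classical.choose x.2) ?_
      intro x x' hxx'
      have hxx'' : Classical.choose x.2 = Classical.choose x'.2 := hxx'
      apply Subtype.ext; apply Subtype.ext
      rw [← Classical.choose_spec x.2, ← Classical.choose_spec x'.2, hxx'']
    haveI hfinY : Finite ↥UY := by
      refine Finite.of_injective (fun y : ↥UY => Classical.choose y.2) ?_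
      intro y y' hyy'
      have hyy'' : Classical.choose y.2 = Classical.choose y'.2 := hyy'
      apply Subtype.ext; apply Subtype.ext
      rw [← Classical.choose_spec y.2, ← Classical.choose_spec y'.2, hyy'']
    have hmk : Cardinal.mk ↥UX = Cardinal.mk ↥UY :=
      Cardinal.mk_congr (Equiv.ofBijective F hFbij)
    cases finite_or_infinite Tc with
    | inl hfin =>
      exact Cardinal.eq.mp (Cardinal.mk_compl_eq_mk_compl_finite_same hmk)
    | inr hinf =>
      refine Cardinal.eq.mp (Cardinal.mk_compl_eq_mk_compl_infinite ?_ ?_)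
      · exact lt_of_lt_of_le (Cardinal.lt_aleph0_of_finite _) (Cardinal.aleph0_le_mk Tc)
      · exact lt_of_lt_of_le (Cardinal.lt_aleph0_of_finite _) (Cardinal.aleph0_le_mk Tc)
  set ec := fun c => (hcompl c).some with hec
  -- glue along the fibers of π
  set A := {q : Q' // q ∉ Set.range α} with hA
  set B := {q : Q' // q ∉ Set.range β} with hB
  set fA : A → Quotient t := fun x => π x.1 with hfA
  set fB : B → Quotient t := fun x => π x.1 with hfB
  have GX : ∀ c, {x : A // fA x = c} ≃ ↥({x : {q : Q' // π q = c} | ∃ i, α i = x.1}ᶜ) := by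
    intro c
    refine ⟨fun x => ⟨⟨x.1.1, x.2⟩, fun hmem => x.1.2 ⟨hmem.choose, hmem.choose_spec⟩⟩,
      fun y => ⟨⟨y.1.1, fun hr => y.2 ⟨hr.choose, hr.choose_spec⟩⟩, y.1.2⟩, ?_, ?_⟩
    · intro x; apply Subtype.ext; apply Subtype.ext; rfl
    · intro y; apply Subtype.ext; apply Subtype.ext; rfl
  have GY : ∀ c, {x : B // fB x = c} ≃ ↥({x : {q : Q' // π q = c} | ∃ i, β i = x.1}ᶜ) := by
    intro c
    refine ⟨fun x => ⟨⟨x.1.1, x.2⟩, fun hmem => x.1.2 ⟨hmem.choose, hmem.choose_spec⟩⟩,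
      fun y => ⟨⟨y.1.1, fun hr => y.2 ⟨hr.choose, hr.choose_spec⟩⟩, y.1.2⟩, ?_, ?_⟩
    · intro x; apply Subtype.ext; apply Subtype.ext; rfl
    · intro y; apply Subtype.ext; apply Subtype.ext; rfl
  set e : ∀ c, {x : A // fA x = c} ≃ {x : B // fB x = c} :=
    fun c => ((GX c).trans (ec c)).trans (GY c).symm with he
  refine ⟨(Equiv.sigmaFiberEquiv fA).symm.trans
    ((Equiv.sigmaCongrRight e).trans (Equiv.sigmaFiberEquiv fB)), ?_⟩
  intro q
  have hq : (Equiv.sigmaFiberEquiv fA).symm.trans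
      ((Equiv.sigmaCongrRight e).trans (Equiv.sigmaFiberEquiv fB)) q
      = (e (fA q) ⟨q, rfl⟩).1 := rfl
  rw [hq]
  have h2 := (e (fA q) ⟨q, rfl⟩).2
  exact Quotient.exact h2.symm

lemma conn_transfer_fwd {p : V → V}
    (hedge : ∀ x ∈ Xset E a, ∀ y ∈ Xset E a, (E x y ↔ E (p x) (p y)))
    {v w : V} (hv : v ∈ Xset E a) (hc : conn E v w) : conn E (p v) (p w) := by
  induction hc with
  | refl => exact conn_refl _
  | @tail c w h₁ h₂ ih =>
    have hb : c ∈ Xset E a := Xset_closed hv h₁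
    have hw : w ∈ Xset E a := Xset_closed_edge hb h₂
    refine Relation.ReflTransGen.tail ih ?_
    rcases h₂ with h | h
    · exact Or.inl ((hedge _ hb _ hw).mp h)
    · exact Or.inr ((hedge _ hw _ hb).mp h)

lemma conn_transfer_bwd {p : V → V}
    (hinj : Set.InjOn p (Xset E a))
    (hedge : ∀ x ∈ Xset E a, ∀ y ∈ Xset E a, (E x y ↔ E (p x) (p y)))
    (himg : p '' Xset E a = Xset E b)
    {v w : V} (hv : v ∈ Xset E a) (hw : w ∈ Xset E a)
    (hc : conn E (p v) (p w)) : conn E v w := by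
  have main : ∀ z, conn E (p v) z → ∀ w', w' ∈ Xset E a → p w' = z → conn E v w' := by
    intro z hz
    induction hz with
    | refl =>
      intro w' hw' hpw'
      have := hinj hw' hv hpw'
      rw [this]
      exact conn_refl v
    | @tail c z h₁ h₂ ih =>
      intro w' hw' hpw'
      have hpv : p v ∈ Xset E b := himg ▸ Set.mem_image_of_mem p hv
      have hcY : c ∈ Xset E b := Xset_closed hpv h₁
      rw [← himg] at hcY
      obtain ⟨x, hx, hpx⟩ := hcY
      have hvx : conn E v x := ih x hx hpx
      refine Relation.ReflTransGen.tail hvx ?_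
      rw [← hpx, ← hpw'] at h₂
      rcases h₂ with h | h
      · exact Or.inl ((hedge _ hx _ hw').mpr h)
      · exact Or.inr ((hedge _ hw' _ hx).mpr h)
  exact main (p w) hc w hw rfl

lemma main_orbit (hlf : LocallyFiniteGraph E) {k : ℕ} {a b : Fin k → V}
    (h : bfEquiv (graphRel E) 2 k a b) :
    ∃ g : V ≃ V, (∀ x y, E x y ↔ E (g x) (g y)) ∧ ∀ i, g (a i) = b i := by
  classical
  obtain ⟨p, hpa, hpinj, hpedge, hpimg⟩ := exists_phi hlf h
  set α : Fin k → Quotient (connSetoid E) := fun i => Quotient.mk (connSetoid E) (a i) with hα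
  set β : Fin k → Quotient (connSetoid E) := fun i => Quotient.mk (connSetoid E) (b i) with hβ
  have haX : ∀ i, a i ∈ Xset E a := fun i => ⟨i, conn_refl _⟩
  have hbY : ∀ i, b i ∈ Xset E b := fun i => ⟨i, conn_refl _⟩
  have hker : ∀ i j, α i = α j ↔ β i = β j := by
    intro i j
    constructor
    · intro hij
      apply Quotient.sound
      have : conn E (a i) (a j) := Quotient.exact hij
      have := conn_transfer_fwd hpedge (haX i) this
      rwa [hpa i, hpa j] at this
    · intro hij
      apply Quotient.sound
      have hc : conn E (b i) (b j) := Quotient.exact hij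
      rw [← hpa i, ← hpa j] at hc
      exact conn_transfer_bwd hpinj hpedge hpimg (haX i) (haX j) hc
  have hCa : ∀ i, Cset E (α i) = {w | conn E (a i) w} := by
    intro i
    ext w
    exact mem_Cset
  have hCb : ∀ i, Cset E (β i) = {w | conn E (b i) w} := by
    intro i
    ext w
    exact mem_Cset
  have hCa_sub : ∀ i, Cset E (α i) ⊆ Xset E a := by
    intro i w hw
    rw [hCa i] at hw
    exact ⟨i, hw⟩
  have hiso : ∀ i, (isoSetoid E).r (α i) (β i) := by
    intro i
    refine ⟨p, hpinj.mono (hCa_sub i), ?_, ?_⟩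
    · apply subset_antisymm
      · rintro _ ⟨x, hx, rfl⟩
        rw [hCa i] at hx
        rw [hCb i]
        have := conn_transfer_fwd hpedge (haX i) hx
        rwa [hpa i] at this
      · intro w hw
        rw [hCb i] at hw
        have hwY : w ∈ Xset E b := ⟨i, hw⟩
        rw [← hpimg] at hwY
        obtain ⟨x, hx, rfl⟩ := hwY
        refine ⟨x, ?_, rfl⟩
        rw [hCa i]
        rw [← hpa i] at hw
        exact conn_transfer_bwd hpinj hpedge hpimg (haX i) hx hw
    · intro x hx y hy
      exact hpedge x (hCa_sub i hx) y (hCa_sub i hy)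
  obtain ⟨γ, hγ⟩ := matching_compl (isoSetoid E) α β hker hiso
  choose e he using fun q : {q : Quotient (connSetoid E) // q ∉ Set.range α} => hγ q
  have he_inj := fun q => (he q).1
  have he_img := fun q => (he q).2.1
  have he_edge := fun q => (he q).2.2
  have hmemX : ∀ v : V, v ∈ Xset E a ↔ (Quotient.mk (connSetoid E) v) ∈ Set.range α := by
    intro v
    constructor
    · rintro ⟨i, hc⟩
      exact ⟨i, Quotient.sound hc⟩
    · rintro ⟨i, hi⟩
      exact ⟨i, Quotient.exact hi⟩
  have hmemY : ∀ v : V, v ∈ Xset E b ↔ (Quotient.mk (connSetoid E) v) ∈ Set.range β := by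
    intro v
    constructor
    · rintro ⟨i, hc⟩
      exact ⟨i, Quotient.sound hc⟩
    · rintro ⟨i, hi⟩
      exact ⟨i, Quotient.exact hi⟩
  set ψ : V → V := fun v =>
    if hq : (Quotient.mk (connSetoid E) v) ∈ Set.range α then v
    else e ⟨Quotient.mk (connSetoid E) v, hq⟩ v with hψdef
  have hqX : ∀ v : V, v ∉ Xset E a → (Quotient.mk (connSetoid E) v) ∉ Set.range α :=
    fun v hv hr => hv ((hmemX v).mpr hr)
  have hψ : ∀ (v : V) (hv : (Quotient.mk (connSetoid E) v) ∉ Set.range α),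
      ψ v = e ⟨Quotient.mk (connSetoid E) v, hv⟩ v := by
    intro v hv
    simp only [hψdef, dif_neg hv]
  -- ψ maps a vertex of a component to the matched component
  have hψmem : ∀ (v : V) (hv : (Quotient.mk (connSetoid E) v) ∉ Set.range α),
      ψ v ∈ Cset E (γ ⟨Quotient.mk (connSetoid E) v, hv⟩).1 := by
    intro v hv
    rw [hψ v hv, ← he_img ⟨Quotient.mk (connSetoid E) v, hv⟩]
    exact Set.mem_image_of_mem _ (self_mem_Cset v)
  have hψY : ∀ (v : V), v ∉ Xset E a → ψ v ∉ Xset E b := by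
    intro v hv hmem
    have hq := hqX v hv
    have h1 := hψmem v hq
    have h2 : Quotient.mk (connSetoid E) (ψ v) = (γ ⟨Quotient.mk (connSetoid E) v, hq⟩).1 := h1
    exact (γ ⟨Quotient.mk (connSetoid E) v, hq⟩).2 (h2 ▸ (hmemY (ψ v)).mp hmem)
  have hψ_e : ∀ (v : V) (hv : (Quotient.mk (connSetoid E) v) ∉ Set.range α)
      (q : {q : Quotient (connSetoid E) // q ∉ Set.range α}),
      q.1 = Quotient.mk (connSetoid E) v → ψ v = e q v := by
    intro v hv q hq
    rw [hψ v hv]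
    congr 1
    exact Subtype.ext hq.symm
  have hclass_ψ : ∀ (v : V) (hv : Quotient.mk (connSetoid E) v ∉ Set.range α),
      Quotient.mk (connSetoid E) (ψ v) = (γ ⟨Quotient.mk (connSetoid E) v, hv⟩).1 :=
    fun v hv => hψmem v hv
  have hψinj : ∀ x, x ∉ Xset E a → ∀ y, y ∉ Xset E a → ψ x = ψ y → x = y := by
    intro x hx y hy hxy
    have hqx := hqX x hx
    have hqy := hqX y hy
    have h1 := hclass_ψ x hqx
    have h2 := hclass_ψ y hqy
    rw [hxy] at h1
    have hγeq : γ ⟨Quotient.mk (connSetoid E) x, hqx⟩ = γ ⟨Quotient.mk (connSetoid E) y, hqy⟩ :=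
      Subtype.ext (h1.symm.trans h2)
    have hqeq := γ.injective hγeq
    have hcl : Quotient.mk (connSetoid E) x = Quotient.mk (connSetoid E) y :=
      congrArg Subtype.val hqeq
    set q : {q : Quotient (connSetoid E) // q ∉ Set.range α} :=
      ⟨Quotient.mk (connSetoid E) x, hqx⟩ with hqdef
    have hxx : x ∈ Cset E q.1 := rfl
    have hyy : y ∈ Cset E q.1 := hcl.symm
    refine he_inj q hxx hyy ?_
    rw [← hψ x hqx, ← hψ_e y hqy q hcl]
    exact hxy
  have hψsurj : ∀ w, w ∉ Xset E b → ∃ x, x ∉ Xset E a ∧ ψ x = w := by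
    intro w hw
    have hqw : Quotient.mk (connSetoid E) w ∉ Set.range β := fun hr => hw ((hmemY w).mpr hr)
    set r : {q : Quotient (connSetoid E) // q ∉ Set.range β} :=
      ⟨Quotient.mk (connSetoid E) w, hqw⟩ with hrdef
    set q := γ.symm r with hqdef
    have hγq : γ q = r := γ.apply_symm_apply r
    have hwr : w ∈ Cset E (γ q).1 := by rw [hγq]; exact self_mem_Cset w
    rw [← he_img q] at hwr
    obtain ⟨x, hx, hex⟩ := hwr
    have hxq : Quotient.mk (connSetoid E) x = q.1 := hx
    have hxnotr : Quotient.mk (connSetoid E) x ∉ Set.range α := fun hr => q.2 (hxq ▸ hr)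
    have hxnot : x ∉ Xset E a := fun hxa => hxnotr ((hmemX x).mp hxa)
    refine ⟨x, hxnot, ?_⟩
    rw [hψ_e x hxnotr q hxq.symm]
    exact hex
  have hψedge : ∀ x, x ∉ Xset E a → ∀ y, y ∉ Xset E a → (E x y ↔ E (ψ x) (ψ y)) := by
    intro x hx y hy
    have hqx := hqX x hx
    have hqy := hqX y hy
    by_cases hcl : Quotient.mk (connSetoid E) x = Quotient.mk (connSetoid E) y
    · set q : {q : Quotient (connSetoid E) // q ∉ Set.range α} :=
        ⟨Quotient.mk (connSetoid E) x, hqx⟩ with hqdef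
      have hxx : x ∈ Cset E q.1 := rfl
      have hyy : y ∈ Cset E q.1 := hcl.symm
      rw [hψ x hqx, hψ_e y hqy q hcl]
      exact he_edge q x hxx y hyy
    · constructor
      · intro hE
        have hcxy : conn E x y := Relation.ReflTransGen.single (Or.inl hE)
        exact absurd (Quotient.sound hcxy) hcl
      · intro hE
        have h1 := hclass_ψ x hqx
        have h2 := hclass_ψ y hqy
        have hcxy : conn E (ψ x) (ψ y) := Relation.ReflTransGen.single (Or.inl hE)
        have hconn : Quotient.mk (connSetoid E) (ψ x) = Quotient.mk (connSetoid E) (ψ y) :=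
          Quotient.sound hcxy
        rw [h1, h2] at hconn
        have hqeq := γ.injective (Subtype.ext hconn)
        exact absurd (congrArg Subtype.val hqeq) hcl
  set g₀ : V → V := fun v => if v ∈ Xset E a then p v else ψ v with hg₀
  have hg₀X : ∀ v ∈ Xset E a, g₀ v = p v := fun v hv => if_pos hv
  have hg₀C : ∀ v, v ∉ Xset E a → g₀ v = ψ v := fun v hv => if_neg hv
  have hg₀Y : ∀ v ∈ Xset E a, g₀ v ∈ Xset E b := fun v hv => by
    rw [hg₀X v hv]
    exact hpimg ▸ Set.mem_image_of_mem p hv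
  have hg₀NY : ∀ v, v ∉ Xset E a → g₀ v ∉ Xset E b := fun v hv => by
    rw [hg₀C v hv]
    exact hψY v hv
  have hbij : Function.Bijective g₀ := by
    constructor
    · intro x y hxy
      by_cases hx : x ∈ Xset E a <;> by_cases hy : y ∈ Xset E a
      · rw [hg₀X x hx, hg₀X y hy] at hxy
        exact hpinj hx hy hxy
      · exact absurd (hxy ▸ hg₀Y x hx) (hg₀NY y hy)
      · exact absurd (hxy.symm ▸ hg₀Y y hy) (hg₀NY x hx)
      · rw [hg₀C x hx, hg₀C y hy] at hxy
        exact hψinj x hx y hy hxy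
    · intro w
      by_cases hw : w ∈ Xset E b
      · rw [← hpimg] at hw
        obtain ⟨x, hx, rfl⟩ := hw
        exact ⟨x, hg₀X x hx⟩
      · obtain ⟨x, hx, hex⟩ := hψsurj w hw
        exact ⟨x, (hg₀C x hx).trans hex⟩
  have hedge_all : ∀ x y, E x y ↔ E (g₀ x) (g₀ y) := by
    intro x y
    by_cases hx : x ∈ Xset E a <;> by_cases hy : y ∈ Xset E a
    · rw [hg₀X x hx, hg₀X y hy]
      exact hpedge x hx y hy
    · constructor
      · intro hE
        exact absurd (Xset_closed_edge hx (Or.inl hE)) hy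
      · intro hE
        exact absurd (Xset_closed_edge (hg₀Y x hx) (Or.inl hE)) (hg₀NY y hy)
    · constructor
      · intro hE
        exact absurd (Xset_closed_edge hy (Or.inr hE)) hx
      · intro hE
        exact absurd (Xset_closed_edge (hg₀Y y hy) (Or.inr hE)) (hg₀NY x hx)
    · rw [hg₀C x hx, hg₀C y hy]
      exact hψedge x hx y hy
  refine ⟨Equiv.ofBijective g₀ hbij, fun x y => hedge_all x y, fun i => ?_⟩
  show g₀ (a i) = b i
  rw [hg₀X _ (haX i)]
  exact hpa i

end Main

/-- **Proposition 9.** A locally finite directed graph has Scott rank at most `3`; indeed any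
two tuples that are `≡²`-equivalent are in the same automorphism orbit. -/
theorem locally_finite_scott_rank_le_three {V : Type} (E : V → V → Prop)
    (hlf : LocallyFiniteGraph E) :
    scottRank (graphRel E) ≤ 3 ∧
    ∀ (k : ℕ) (a b : Fin k → V), bfEquiv (graphRel E) 2 k a b →
      ∃ g : V ≃ V, (∀ x y, E x y ↔ E (g x) (g y)) ∧ ∀ i, g (a i) = b i := by
  constructor
  · refine csInf_le' ?_
    intro k a
    refine lt_of_le_of_lt (csInf_le' ?_) ord23
    intro b hb
    obtain ⟨g, hg1, hg2⟩ := main_orbit hlf hb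
    refine ⟨g, ?_, hg2⟩
    intro i t
    exact hg1 (t 0) (t 1)
  · intro k a b hb
    exact main_orbit hlf hb

end AutoStruct
end

section
/- For each n ≥ 1, the tree T_n whose domain is the language a₁* a₂* ⋯ aₙ* over the n-letter alphabet {a₁,…,aₙ}, partially ordered by the prefix relation, is an automatic partial order tree whose Cantor–Bendixson rank is exactly n. -/
namespace AutoStruct

section PrefixTreeAux

variable {n : ℕ}

def oLe (b : Option (Fin n)) (a : Fin n) : Prop := ∀ c ∈ b, c ≤ a

instance (b : Option (Fin n)) (a : Fin n) : Decidable (oLe b a) := by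
  unfold oLe; infer_instance

def chainO : Option (Fin n) → List (Fin n) → Prop
  | _, [] => True
  | b, a :: w => oLe b a ∧ chainO (some a) w

lemma chainO_iff : ∀ (w : List (Fin n)) (b), chainO b w ↔
    (List.Pairwise (· ≤ ·) w ∧ ∀ c ∈ b, ∀ x ∈ w, c ≤ x)
  | [], b => by simp [chainO]
  | a :: w, b => by
    rw [chainO, chainO_iff w (some a), List.pairwise_cons]
    constructor
    · rintro ⟨h1, h2, h3⟩
      refine ⟨⟨fun x hx => h3 a rfl x hx, h2⟩, fun c hc x hx => ?_⟩
      rcases List.mem_cons.mp hx with rfl | hx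
      · exact h1 c hc
      · exact le_trans (h1 c hc) (h3 a rfl x hx)
    · rintro ⟨⟨h1, h2⟩, h3⟩
      exact ⟨fun c hc => h3 c hc a List.mem_cons_self, h2,
        fun c hc x hx => by cases hc; exact h1 x hx⟩

lemma chainO_none_iff (w : List (Fin n)) : chainO none w ↔ List.Pairwise (· ≤ ·) w := by
  simp [chainO_iff]

def sortDFA (n : ℕ) : DFA (Fin n) (Option (Option (Fin n))) where
  step s a := match s with
    | none => none
    | some b => if oLe b a then some (some a) else none
  start := some none
  accept := {s | s ≠ none}

lemma sortDFA_none : ∀ w : List (Fin n), (sortDFA n).evalFrom none w = none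
  | [] => rfl
  | a :: w => by
    show (sortDFA n).evalFrom ((sortDFA n).step none a) w = none
    exact sortDFA_none w

lemma sortDFA_some : ∀ (w : List (Fin n)) (b),
    (sortDFA n).evalFrom (some b) w ≠ none ↔ chainO b w
  | [], b => by simp [DFA.evalFrom, chainO]
  | a :: w, b => by
    show (sortDFA n).evalFrom ((sortDFA n).step (some b) a) w ≠ none ↔ _
    show (sortDFA n).evalFrom (if oLe b a then some (some a) else none) w ≠ none ↔ _
    rw [chainO]
    by_cases h : oLe b a
    · rw [if_pos h, sortDFA_some w (some a)]
      simp [h]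
    · rw [if_neg h, sortDFA_none]
      simp [h]

lemma part1 (n : ℕ) : IsRegularLang {w : List (Fin n) | List.Pairwise (· ≤ ·) w} := by
  refine ⟨_, inferInstance, sortDFA n, ?_⟩
  ext w
  rw [DFA.mem_accepts]
  show (sortDFA n).evalFrom (some none) w ∈ {s | s ≠ none} ↔ _
  rw [Set.mem_setOf_eq, sortDFA_some, chainO_none_iff]
  rfl

/-! ### Part 2 -/

def dA (a : Fin n) : Option (Fin n) × Option (Fin n) := (some a, some a)
def eA (a : Fin n) : Option (Fin n) × Option (Fin n) := (none, some a)

def prefDFA (n : ℕ) : DFA (Option (Fin n) × Option (Fin n)) (Option (Option (Fin n) × Bool)) where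
  step s ℓ := match s, ℓ with
    | none, _ => none
    | some (b, ph), (some a, some a') =>
        if ph = false ∧ a = a' ∧ oLe b a then some (some a, false) else none
    | some (b, _), (none, some a) => if oLe b a then some (some a, true) else none
    | some _, (_, none) => none
  start := some (none, false)
  accept := {s | s ≠ none}

lemma prefDFA_none : ∀ w, (prefDFA n).evalFrom none w = none
  | [] => rfl
  | ℓ :: w => by
    show (prefDFA n).evalFrom ((prefDFA n).step none ℓ) w = none
    exact prefDFA_none w

lemma prefDFA_pad : ∀ (w) (b : Option (Fin n)),
    (prefDFA n).evalFrom (some (b, true)) w ≠ none ↔ ∃ t, w = t.map eA ∧ chainO b t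
  | [], b => by
    simp only [DFA.evalFrom, List.foldl_nil]
    constructor
    · intro _; exact ⟨[], rfl, trivial⟩
    · intro _; simp
  | (x, y) :: w, b => by
    show (prefDFA n).evalFrom ((prefDFA n).step (some (b, true)) (x, y)) w ≠ none ↔ _
    match x, y with
    | some a, some a' =>
      show (prefDFA n).evalFrom (if (true : Bool) = false ∧ a = a' ∧ oLe b a then some (some a, false) else none) w ≠ none ↔ _
      rw [if_neg (by simp)]
      rw [prefDFA_none]
      simp only [ne_eq, not_true_eq_false, false_iff, not_exists, not_and]
      rintro t h
      cases t with
      | nil => simp at h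
      | cons c t => simp [eA] at h
    | some a, none =>
      show (prefDFA n).evalFrom none w ≠ none ↔ _
      rw [prefDFA_none]
      simp only [ne_eq, not_true_eq_false, false_iff, not_exists, not_and]
      rintro t h
      cases t with
      | nil => simp at h
      | cons c t => simp [eA] at h
    | none, none =>
      show (prefDFA n).evalFrom none w ≠ none ↔ _
      rw [prefDFA_none]
      simp only [ne_eq, not_true_eq_false, false_iff, not_exists, not_and]
      rintro t h
      cases t with
      | nil => simp at h
      | cons c t => simp [eA] at h
    | none, some a =>
      show (prefDFA n).evalFrom (if oLe b a then some (some a, true) else none) w ≠ none ↔ _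
      by_cases h : oLe b a
      · rw [if_pos h, prefDFA_pad w (some a)]
        constructor
        · rintro ⟨t, rfl, ht⟩
          exact ⟨a :: t, rfl, h, ht⟩
        · rintro ⟨t, het, ht⟩
          cases t with
          | nil => simp at het
          | cons c t =>
            simp only [List.map_cons, eA, List.cons.injEq, Prod.mk.injEq] at het
            obtain ⟨⟨-, hca⟩, hw⟩ := het
            obtain rfl := Option.some.inj hca
            exact ⟨t, hw, ht.2⟩
      · rw [if_neg h, prefDFA_none]
        simp only [ne_eq, not_true_eq_false, false_iff, not_exists, not_and]
        rintro t het
        cases t with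
        | nil => simp at het
        | cons c t =>
          simp only [List.map_cons, eA, List.cons.injEq, Prod.mk.injEq] at het
          obtain ⟨⟨-, hca⟩, -⟩ := het
          cases hca
          rintro ⟨hc, -⟩
          exact h hc


lemma prefDFA_diag : ∀ (w) (b : Option (Fin n)),
    (prefDFA n).evalFrom (some (b, false)) w ≠ none ↔
      ∃ u t, w = u.map dA ++ t.map eA ∧ chainO b (u ++ t)
  | [], b => by
    simp only [DFA.evalFrom, List.foldl_nil]
    constructor
    · intro _; exact ⟨[], [], rfl, trivial⟩
    · intro _; simp
  | (x, y) :: w, b => by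
    show (prefDFA n).evalFrom ((prefDFA n).step (some (b, false)) (x, y)) w ≠ none ↔ _
    match x, y with
    | some a, some a' =>
      show (prefDFA n).evalFrom
        (if (false : Bool) = false ∧ a = a' ∧ oLe b a then some (some a, false) else none) w
          ≠ none ↔ _
      by_cases h : a = a' ∧ oLe b a
      · obtain ⟨rfl, hle⟩ := h
        rw [if_pos ⟨rfl, rfl, hle⟩, prefDFA_diag w (some a)]
        constructor
        · rintro ⟨u, t, rfl, ht⟩
          exact ⟨a :: u, t, rfl, hle, ht⟩
        · rintro ⟨u, t, het, ht⟩
          cases u with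
          | nil =>
            cases t with
            | nil => simp at het
            | cons c t => simp [eA] at het
          | cons c u =>
            simp only [List.map_cons, dA, List.cons_append, List.cons.injEq,
              Prod.mk.injEq] at het
            obtain ⟨⟨hca, -⟩, hw⟩ := het
            obtain rfl := Option.some.inj hca
            exact ⟨u, t, hw, ht.2⟩
      · rw [if_neg (by tauto), prefDFA_none]
        simp only [ne_eq, not_true_eq_false, false_iff, not_exists, not_and]
        rintro u t het
        cases u with
        | nil =>
          cases t with
          | nil => simp at het
          | cons c t => simp [eA] at het
        | cons c u =>
          simp only [List.map_cons, dA, List.cons_append, List.cons.injEq,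
            Prod.mk.injEq] at het
          obtain ⟨⟨hca, hca'⟩, -⟩ := het
          obtain rfl := Option.some.inj hca
          obtain rfl := Option.some.inj hca'
          rintro ⟨hle, -⟩
          exact h ⟨rfl, hle⟩
    | some a, none =>
      show (prefDFA n).evalFrom none w ≠ none ↔ _
      rw [prefDFA_none]
      simp only [ne_eq, not_true_eq_false, false_iff, not_exists, not_and]
      rintro u t het
      cases u with
      | nil =>
        cases t with
        | nil => simp at het
        | cons c t => simp [eA] at het
      | cons c u => simp [dA] at het
    | none, none =>
      show (prefDFA n).evalFrom none w ≠ none ↔ _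
      rw [prefDFA_none]
      simp only [ne_eq, not_true_eq_false, false_iff, not_exists, not_and]
      rintro u t het
      cases u with
      | nil =>
        cases t with
        | nil => simp at het
        | cons c t => simp [eA] at het
      | cons c u => simp [dA] at het
    | none, some a =>
      show (prefDFA n).evalFrom (if oLe b a then some (some a, true) else none) w ≠ none ↔ _
      by_cases h : oLe b a
      · rw [if_pos h, prefDFA_pad w (some a)]
        constructor
        · rintro ⟨t, rfl, ht⟩
          exact ⟨[], a :: t, rfl, h, ht⟩
        · rintro ⟨u, t, het, ht⟩
          cases u with
          | nil =>
            cases t with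
            | nil => simp at het
            | cons c t =>
              simp only [List.map_nil, List.map_cons, eA, List.nil_append, List.cons.injEq,
                Prod.mk.injEq] at het
              obtain ⟨⟨-, hca⟩, hw⟩ := het
              obtain rfl := Option.some.inj hca
              exact ⟨t, hw, ht.2⟩
          | cons c u => simp [dA] at het
      · rw [if_neg h, prefDFA_none]
        simp only [ne_eq, not_true_eq_false, false_iff, not_exists, not_and]
        rintro u t het
        cases u with
        | nil =>
          cases t with
          | nil => simp at het
          | cons c t =>
            simp only [List.map_nil, List.map_cons, eA, List.nil_append, List.cons.injEq,
              Prod.mk.injEq] at het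
            obtain ⟨⟨-, hca⟩, -⟩ := het
            obtain rfl := Option.some.inj hca
            rintro ⟨hle, -⟩
            exact h hle
        | cons c u => simp [dA] at het

lemma cv_cons (u v : List (Fin n)) (m : ℕ) :
    (List.range (m+1)).map (fun k => (u[k]?, v[k]?)) =
      (u[0]?, v[0]?) :: (List.range m).map (fun k => (u[(k+1)]?, v[(k+1)]?)) := by
  rw [List.range_succ_eq_map, List.map_cons, List.map_map]
  rfl

lemma cv_eq_nil : ∀ t : List (Fin n),
    (List.range t.length).map (fun k => ((([] : List (Fin n))[k]? : Option (Fin n)), t[k]?))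
      = t.map eA
  | [] => rfl
  | a :: t => by
    rw [List.length_cons, cv_cons]
    have h : ∀ k : ℕ, ((([] : List (Fin n))[(k+1)]? : Option (Fin n)), (a :: t)[(k+1)]?)
        = (([] : List (Fin n))[k]?, t[k]?) := by intro k; simp
    simp only [h]
    rw [cv_eq_nil t]
    rfl

lemma cv_eq : ∀ u t : List (Fin n),
    (List.range (u.length + t.length)).map (fun k => (u[k]?, (u ++ t)[k]?))
      = u.map dA ++ t.map eA
  | [], t => by simpa using cv_eq_nil t
  | a :: u, t => by
    have hl : (a :: u).length + t.length = (u.length + t.length) + 1 := by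
      simp only [List.length_cons]; omega
    rw [hl, cv_cons]
    have h : ∀ k : ℕ, (((a :: u)[(k+1)]? : Option (Fin n)), ((a :: u) ++ t)[(k+1)]?)
        = (u[k]?, (u ++ t)[k]?) := by intro k; simp
    simp only [h]
    rw [cv_eq u t]
    rfl

lemma conv2_eq (u t : List (Fin n)) : conv2 u (u ++ t) = u.map dA ++ t.map eA := by
  have hm : max u.length (u ++ t).length = u.length + t.length := by
    rw [List.length_append]; omega
  rw [conv2, hm]
  exact cv_eq u t

lemma part2 (n : ℕ) : IsRegularRel2 (fun u v : List (Fin n) =>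
    List.Pairwise (· ≤ ·) u ∧ List.Pairwise (· ≤ ·) v ∧ u <+: v) := by
  refine ⟨_, inferInstance, prefDFA n, ?_⟩
  ext w
  rw [DFA.mem_accepts]
  show (prefDFA n).evalFrom (some (none, false)) w ∈ {s | s ≠ none} ↔ _
  rw [Set.mem_setOf_eq, prefDFA_diag]
  constructor
  · rintro ⟨u, t, rfl, hc⟩
    rw [chainO_none_iff] at hc
    exact ⟨u, u ++ t, ⟨hc.sublist (List.sublist_append_left u t), hc, List.prefix_append u t⟩,
      (conv2_eq u t).symm⟩
  · rintro ⟨u, v, ⟨hu, hv, hpre⟩, rfl⟩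
    obtain ⟨t, rfl⟩ := hpre
    exact ⟨u, t, conv2_eq u t, (chainO_none_iff _).mpr hv⟩


/-! Part 3 -/

lemma part3 (n : ℕ) : IsPOTree (fun u v : ↥{w : List (Fin n) | List.Pairwise (· ≤ ·) w} =>
    (u : List (Fin n)) <+: ↑v) := by
  refine ⟨fun x => List.prefix_refl _, fun x y z h1 h2 => h1.trans h2,
    fun x y h1 h2 => Subtype.ext (h1.eq_of_length (Nat.le_antisymm h1.length_le h2.length_le)),
    ⟨⟨[], List.Pairwise.nil⟩, fun x => List.nil_prefix⟩,
    fun y => ⟨?_, fun x z hx hz => List.prefix_or_prefix_of_prefix hx hz⟩⟩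
  have h1 : {w : List (Fin n) | w <+: ↑y}.Finite := by
    apply Set.Finite.subset (Set.finite_range
      (fun k : Fin ((y : List (Fin n)).length + 1) => (y : List (Fin n)).take k))
    intro w hw
    exact ⟨⟨w.length, Nat.lt_succ_of_le hw.length_le⟩, (List.prefix_iff_eq_take.mp hw).symm⟩
  exact Set.Finite.preimage (f := (Subtype.val : ↥{w : List (Fin n) | List.Pairwise (· ≤ ·) w} → List (Fin n))) Subtype.coe_injective.injOn h1

/-! Part 4 -/

lemma exists_split {α : Type*} : ∀ (u v : List α), ¬ u <+: v → ¬ v <+: u →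
    ∃ c a b, a ≠ b ∧ c ++ [a] <+: u ∧ c ++ [b] <+: v
  | [], _, h, _ => absurd List.nil_prefix h
  | _ :: _, [], _, h => absurd List.nil_prefix h
  | x :: u, y :: v, h1, h2 => by
    by_cases hxy : x = y
    · subst hxy
      have h1' : ¬ u <+: v := fun h => h1 (List.cons_prefix_cons.mpr ⟨rfl, h⟩)
      have h2' : ¬ v <+: u := fun h => h2 (List.cons_prefix_cons.mpr ⟨rfl, h⟩)
      obtain ⟨c, a, b, hab, hu, hv⟩ := exists_split u v h1' h2'
      exact ⟨x :: c, a, b, hab, List.cons_prefix_cons.mpr ⟨rfl, hu⟩,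
        List.cons_prefix_cons.mpr ⟨rfl, hv⟩⟩
    · exact ⟨[], x, y, hxy, List.cons_prefix_cons.mpr ⟨rfl, List.nil_prefix⟩,
        List.cons_prefix_cons.mpr ⟨rfl, List.nil_prefix⟩⟩

variable {n : ℕ}

abbrev domn (n : ℕ) : Set (List (Fin n)) := {w : List (Fin n) | List.Pairwise (· ≤ ·) w}
abbrev leP (n : ℕ) : ↥(domn n) → ↥(domn n) → Prop := fun u v => (u : List (Fin n)) <+: ↑v
def Yk (n k : ℕ) : Set ↥(domn n) := {w | ∀ a ∈ (w : List (Fin n)), (a : ℕ) + k < n}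

lemma sorted_last {w : List (Fin n)} (hw : w ∈ domn n) {c : List (Fin n)} {a : Fin n}
    (h : c ++ [a] <+: w) : ∀ x ∈ c ++ [a], x ≤ a := by
  have hs : List.Pairwise (· ≤ ·) (c ++ [a]) := hw.sublist h.sublist
  obtain ⟨-, -, h3⟩ := List.pairwise_append.mp hs
  intro x hx
  rcases List.mem_append.mp hx with hx | hx
  · exact h3 x hx a (List.mem_singleton.mpr rfl)
  · exact le_of_eq (List.mem_singleton.mp hx)

lemma deriv_subset (k : ℕ) : poDeriv (leP n) (Yk n k) ⊆
    {w | ∃ a b : Fin n, (a : ℕ) < b ∧ (b : ℕ) + k < n ∧ ∀ x ∈ (w : List (Fin n)), x ≤ a} := by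
  rintro w ⟨hw, p, q, hp0, hq0, hpX, hqX, hpS, hqS, n₀, m₀, h1, h2⟩
  have hwp : ∀ m, (w : List (Fin n)) <+: ↑(p m) := by
    intro m
    induction m with
    | zero => rw [hp0]
    | succ m ih => exact ih.trans (hpS m).1
  have hwq : ∀ m, (w : List (Fin n)) <+: ↑(q m) := by
    intro m
    induction m with
    | zero => rw [hq0]
    | succ m ih => exact ih.trans (hqS m).1
  obtain ⟨c, a, b, hab, ha, hb⟩ := exists_split _ _ h1 h2
  have keyq : ¬ (c ++ [a] <+: ↑(q m₀)) := by
    intro hca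
    apply hab
    have hcomp := List.prefix_or_prefix_of_prefix hca hb
    have heq : c ++ [a] = c ++ [b] := by
      rcases hcomp with h | h
      · exact h.eq_of_length (by simp)
      · exact (h.eq_of_length (by simp)).symm
    simpa using heq
  have keyp : ¬ (c ++ [b] <+: ↑(p n₀)) := by
    intro hcb
    apply hab
    have hcomp := List.prefix_or_prefix_of_prefix ha hcb
    have heq : c ++ [a] = c ++ [b] := by
      rcases hcomp with h | h
      · exact h.eq_of_length (by simp)
      · exact (h.eq_of_length (by simp)).symm
    simpa using heq
  have hw1 : (w : List (Fin n)) <+: c ++ [a] := by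
    rcases List.prefix_or_prefix_of_prefix (hwp n₀) ha with h | h
    · exact h
    · exact absurd (h.trans (hwq m₀)) keyq
  have hw2 : (w : List (Fin n)) <+: c ++ [b] := by
    rcases List.prefix_or_prefix_of_prefix (hwq m₀) hb with h | h
    · exact h
    · exact absurd (h.trans (hwp n₀)) keyp
  have hla : ∀ x ∈ (w : List (Fin n)), x ≤ a := fun x hx =>
    sorted_last (p n₀).2 ha x (hw1.subset hx)
  have hlb : ∀ x ∈ (w : List (Fin n)), x ≤ b := fun x hx =>
    sorted_last (q m₀).2 hb x (hw2.subset hx)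
  have hak : (a : ℕ) + k < n := hpX n₀ a (ha.subset (by simp))
  have hbk : (b : ℕ) + k < n := hqX m₀ b (hb.subset (by simp))
  rcases lt_or_gt_of_ne hab with h | h
  · exact ⟨a, b, by exact_mod_cast h, hbk, hla⟩
  · exact ⟨b, a, by exact_mod_cast h, hak, hlb⟩

lemma deriv_Yk_subset (k : ℕ) : poDeriv (leP n) (Yk n k) ⊆ Yk n (k + 1) := by
  intro w hw
  obtain ⟨a, b, hab, hbk, hle⟩ := deriv_subset k hw
  intro x hx
  have := hle x hx
  have : (x : ℕ) ≤ a := this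
  omega

lemma Yk_subset_deriv (k : ℕ) (hk : k + 1 < n) : Yk n (k + 1) ⊆ poDeriv (leP n) (Yk n k) := by
  intro w hw
  have hwk : w ∈ Yk n k := fun a ha => by have := hw a ha; omega
  set A : Fin n := ⟨n - k - 2, by omega⟩ with hA
  set B : Fin n := ⟨n - k - 1, by omega⟩ with hB
  have hwle : ∀ x ∈ (w : List (Fin n)), x ≤ A := by
    intro x hx
    have := hw x hx
    show (x : ℕ) ≤ n - k - 2
    omega
  have hsort : ∀ (C : Fin n), (∀ x ∈ (w : List (Fin n)), x ≤ C) → ∀ j,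
      List.Pairwise (· ≤ ·) ((w : List (Fin n)) ++ List.replicate j C) := by
    intro C hC j
    rw [List.pairwise_append]
    exact ⟨w.2, List.pairwise_replicate.mpr (Or.inr le_rfl),
      fun x hx y hy => le_trans (hC x hx) (le_of_eq ((List.eq_of_mem_replicate hy).symm))⟩
  have hAB : ∀ x ∈ (w : List (Fin n)), x ≤ B := fun x hx => le_trans (hwle x hx) (by
    show (n - k - 2 : ℕ) ≤ n - k - 1; omega)
  set p : ℕ → ↥(domn n) := fun j => ⟨(w : List (Fin n)) ++ List.replicate j A, hsort A hwle j⟩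
    with hp
  set q : ℕ → ↥(domn n) := fun j => ⟨(w : List (Fin n)) ++ List.replicate j B, hsort B hAB j⟩
    with hq
  have hmem : ∀ (C : Fin n), (C : ℕ) + k < n → ∀ (j : ℕ) (x : Fin n),
      x ∈ (w : List (Fin n)) ++ List.replicate j C → (x : ℕ) + k < n := by
    intro C hC j x hx
    rcases List.mem_append.mp hx with hx | hx
    · exact hwk x hx
    · rw [List.eq_of_mem_replicate hx]; exact hC
  have hAk : (A : ℕ) + k < n := by show (n - k - 2) + k < n; omega
  have hBk : (B : ℕ) + k < n := by show (n - k - 1) + k < n; omega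
  have hstep : ∀ (C : Fin n) (hs : ∀ j : ℕ, ((w : List (Fin n)) ++ List.replicate j C) ∈ domn n) (j : ℕ),
      leP n (⟨(w : List (Fin n)) ++ List.replicate j C, hs j⟩ : ↥(domn n))
        ⟨(w : List (Fin n)) ++ List.replicate (j+1) C, hs (j+1)⟩ ∧
      (⟨(w : List (Fin n)) ++ List.replicate j C, hs j⟩ : ↥(domn n)) ≠
        ⟨(w : List (Fin n)) ++ List.replicate (j+1) C, hs (j+1)⟩ := by
    intro C hs j
    constructor
    · show (w : List (Fin n)) ++ List.replicate j C <+: (w : List (Fin n)) ++ List.replicate (j+1) C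
      rw [List.replicate_succ' (n := j) (a := C), ← List.append_assoc]
      exact List.prefix_append _ _
    · intro h
      have := congrArg (fun z => ((z : ↥(domn n)) : List (Fin n)).length) h
      simp at this
  refine ⟨hwk, p, q, ?_, ?_, fun j => fun x hx => hmem A hAk j x hx,
    fun j => fun x hx => hmem B hBk j x hx, fun j => hstep A _ j, fun j => hstep B _ j,
    1, 1, ?_, ?_⟩
  · apply Subtype.ext; simp [hp]
  · apply Subtype.ext; simp [hq]
  · show ¬ ((w : List (Fin n)) ++ List.replicate 1 A <+: (w : List (Fin n)) ++ List.replicate 1 B)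
    intro h
    have heq := h.eq_of_length (by simp)
    have : A = B := by simpa using heq
    have : (n - k - 2 : ℕ) = n - k - 1 := congrArg Fin.val this
    omega
  · show ¬ ((w : List (Fin n)) ++ List.replicate 1 B <+: (w : List (Fin n)) ++ List.replicate 1 A)
    intro h
    have heq := h.eq_of_length (by simp)
    have : B = A := by simpa using heq
    have : (n - k - 1 : ℕ) = n - k - 2 := congrArg Fin.val this
    omega

lemma derivYk (k : ℕ) (hk : k + 1 < n) : poDeriv (leP n) (Yk n k) = Yk n (k + 1) :=
  subset_antisymm (deriv_Yk_subset k) (Yk_subset_deriv k hk)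

lemma derivTop (hn : 1 ≤ n) : poDeriv (leP n) (Yk n (n - 1)) = ∅ := by
  rw [Set.eq_empty_iff_forall_notMem]
  intro w hw
  obtain ⟨a, b, hab, hbk, -⟩ := deriv_subset (n - 1) hw
  omega

lemma deriv_empty : poDeriv (leP n) ∅ = ∅ := by
  rw [Set.eq_empty_iff_forall_notMem]
  rintro w ⟨hw, -⟩
  exact hw

universe u

lemma iter_succ (k : ℕ) :
    poDerivIter.{u} (leP n) ((k + 1 : ℕ) : Ordinal.{u}) =
      poDeriv (leP n) (poDerivIter.{u} (leP n) ((k : ℕ) : Ordinal.{u})) := by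
  rw [show ((k + 1 : ℕ) : Ordinal.{u}) = Order.succ ((k : ℕ) : Ordinal.{u}) by
    rw [Nat.cast_add_one, Ordinal.add_one_eq_succ]]
  exact Ordinal.limitRecOn_succ _ _ _ _

lemma iter_zero : poDerivIter.{u} (leP n) ((0 : ℕ) : Ordinal.{u}) = Yk n 0 := by
  have h0 : poDerivIter.{u} (leP n) ((0 : ℕ) : Ordinal.{u}) = Set.univ := by
    rw [Nat.cast_zero]
    exact Ordinal.limitRecOn_zero _ _ _
  rw [h0]
  ext w
  simp only [Set.mem_univ, true_iff, Yk, Set.mem_setOf_eq]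
  intro a _
  omega

lemma iter_eq (k : ℕ) (hk : k < n) : poDerivIter.{u} (leP n) k = Yk n k := by
  induction k with
  | zero => exact iter_zero.{u}
  | succ k ih => rw [iter_succ.{u} k, ih (by omega), derivYk k hk]

lemma iter_n (hn : 1 ≤ n) : poDerivIter.{u} (leP n) n = ∅ := by
  have h2 : ((n : ℕ) : Ordinal) = (((n - 1) + 1 : ℕ) : Ordinal) := by
    congr 1
    omega
  rw [h2, iter_succ.{u} (n - 1), iter_eq.{u} (n - 1) (by omega), derivTop hn]

lemma iter_n1 (hn : 1 ≤ n) : poDerivIter.{u} (leP n) (n + 1 : ℕ) = ∅ := by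
  rw [iter_succ.{u} n, iter_n.{u} hn, deriv_empty]

lemma part4 (n : ℕ) (hn : 1 ≤ n) : CBrankPO.{u} (leP n) = n := by
  have hmem : poDerivIter.{u} (leP n) ((n : Ordinal.{u}) + 1) = poDerivIter.{u} (leP n) (n : Ordinal.{u}) := by
    rw [← Nat.cast_add_one, iter_n1.{u} hn, iter_n.{u} hn]
  have hmem' : (n : Ordinal.{u}) ∈
      {α : Ordinal.{u} | poDerivIter.{u} (leP n) (α + 1) = poDerivIter.{u} (leP n) α} := hmem
  apply le_antisymm (csInf_le' hmem')
  refine le_csInf ⟨_, hmem'⟩ fun b hb => ?_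
  by_contra hlt
  push_neg at hlt
  obtain ⟨k, rfl⟩ := Ordinal.lt_omega0.mp (hlt.trans (Ordinal.nat_lt_omega0 n))
  have hkn : k < n := by exact_mod_cast hlt
  have hb' : poDerivIter.{u} (leP n) ((k + 1 : ℕ) : Ordinal.{u}) = poDerivIter.{u} (leP n) ((k : ℕ) : Ordinal.{u}) := by
    rw [Nat.cast_add_one]; exact hb
  by_cases hk1 : k + 1 < n
  · rw [iter_eq.{u} (k + 1) hk1, iter_eq.{u} k hkn] at hb'
    have hx : (⟨[⟨n - 1 - k, by omega⟩], List.pairwise_singleton _ _⟩ : ↥(domn n)) ∈ Yk n k := by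
      intro a ha
      rw [List.mem_singleton] at ha
      subst ha
      show (n - 1 - k) + k < n
      omega
    rw [← hb'] at hx
    have := hx ⟨n - 1 - k, by omega⟩ (List.mem_singleton.mpr rfl)
    simp only at this
    omega
  · have hk1' : k + 1 = n := by omega
    rw [iter_eq.{u} k hkn] at hb'
    rw [hk1'] at hb'
    rw [iter_n.{u} hn] at hb'
    have hx : (⟨[], List.Pairwise.nil⟩ : ↥(domn n)) ∈ Yk n k := by
      intro a ha
      simp at ha
    rw [← hb'] at hx
    exact hx


end PrefixTreeAux

/-- **Example.** For each `n ≥ 1`, the tree with domain `a₁* a₂* ⋯ aₙ*` (the nondecreasing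
words over an `n`-letter alphabet) under the prefix order is an automatic partial order tree
of Cantor–Bendixson rank exactly `n`. -/
theorem prefix_tree_CB_rank (n : ℕ) (hn : 1 ≤ n) :
    IsRegularLang {w : List (Fin n) | List.Pairwise (· ≤ ·) w} ∧
    IsRegularRel2 (fun u v : List (Fin n) =>
      List.Pairwise (· ≤ ·) u ∧ List.Pairwise (· ≤ ·) v ∧ u <+: v) ∧
    IsPOTree (fun u v : ↥{w : List (Fin n) | List.Pairwise (· ≤ ·) w} =>
      (u : List (Fin n)) <+: ↑v) ∧
    CBrankPO (fun u v : ↥{w : List (Fin n) | List.Pairwise (· ≤ ·) w} =>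
      (u : List (Fin n)) <+: ↑v) = n :=
  ⟨part1 n, part2 n, part3 n, part4 n hn⟩

end AutoStruct
end
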